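/- arXiv:1307.7896 — 3 statements merged into one kernel-verified Lean document; each statement's English description precedes it below -/
import Mathlib

section
/- For each sign ε ∈ {+,−}, every integer r, and every polynomial f ∈ F, one has r · Σ_{l,k≥0, l−k=r} d^ε_l c^ε_k f = ∓ Σ_{l,k≥0, n≠0, l−k−n=r} d^ε_l (H(n)/2) c^ε_k f, where the upper sign goes with ε = + and both sums have only finitely many nonzero terms. (This is the coefficientwise form of the identity ∂_z(E^ε_+(z)E^ε_−(z)) = E^ε_+(z)(∓Σ_{n≠0} (H(n)/2) z^{−n−1})E^ε_−(z).) -/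
open MvPolynomial

/-- The semi-infinite wedge space `Λ`: complex vector space with basis `v_{S,T}`
indexed by pairs `(S, T)` of finite subsets of the positive integers.  The basis
vector `v_{S,T}` encodes the semi-infinite wedge product with support
`supp(S,T) = {-s-1/2 : s ∈ S} ∪ {-1/2} ∪ {k+1/2 : k ∈ ℤ_{≥1}, k ∉ T} ⊆ ℤ + 1/2`. -/
abbrev Wedge : Type := (Finset ℕ+ × Finset ℕ+) →₀ ℂ

/-- Image of the basis vector `v_{S,T}` under the operator `A(m)` (for `m ∈ ℤ + 1/2`,
i.e. a rational with denominator `2`; `A(m) := 0` for other rationals).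
`A(m) v_{S,T} = 0` if `m ∈ supp(S,T)` or `m = 1/2`; otherwise
`A(m) v_{S,T} = (m - 1/2) ⬝ (-1)^j ⬝ v_{S',T'}` where `j = #{i ∈ supp(S,T) : i < m}`
and `supp(S',T') = supp(S,T) ∪ {m}`.  Writing `m = n + 1/2` with `n = ⌊m⌋ ∈ ℤ`:
if `n ≥ 1` then `m ∈ supp(S,T)` iff `n ∉ T`, and the new support corresponds to
`(S, T \ {n})` with sign exponent `j = |S| + n - #{t ∈ T : t < n}`;
if `n ≤ -2` then `m = -s - 1/2` with `s = -n-1 ≥ 1`, `m ∈ supp(S,T)` iff `s ∈ S`,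
and the new support corresponds to `(S ∪ {s}, T)` with `j = #{s' ∈ S : s' > s}`;
if `n = 0` (`m = 1/2`) or `n = -1` (`m = -1/2 ∈ supp(S,T)`) the result is `0`. -/
noncomputable def Abasis (m : ℚ) (ST : Finset ℕ+ × Finset ℕ+) : Wedge :=
  if m.den = 2 then
    let n : ℤ := ⌊m⌋
    if hn : 1 ≤ n then
      let k : ℕ+ := ⟨n.toNat, by omega⟩
      if k ∈ ST.2 then
        (((n : ℂ)) * (-1) ^ (ST.1.card + n.toNat - (ST.2.filter (· < k)).card)) •
          Finsupp.single (ST.1, ST.2.erase k) (1 : ℂ)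
      else 0
    else if hn' : n ≤ -2 then
      let s : ℕ+ := ⟨(-n - 1).toNat, by omega⟩
      if s ∈ ST.1 then 0
      else
        (((n : ℂ)) * (-1) ^ ((ST.1.filter (s < ·)).card)) •
          Finsupp.single (insert s ST.1, ST.2) (1 : ℂ)
    else 0
  else 0

/-- Image of the basis vector `v_{S,T}` under the operator `A*(m)` (for `m ∈ ℤ + 1/2`).
`A*(m) v_{S,T} = 0` if `-m ∉ supp(S,T)` or `m = 1/2`; otherwise
`A*(m) v_{S,T} = (m - 1/2) ⬝ (-1)^{j'} ⬝ v_{S'',T''}` where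
`j' = #{i ∈ supp(S,T) : i < -m}` and `supp(S'',T'') = supp(S,T) \ {-m}`.
Writing `m = n + 1/2`, `n = ⌊m⌋`: if `n ≥ 1` then `-m = -n - 1/2 ∈ supp(S,T)` iff
`n ∈ S`, new pair `(S \ {n}, T)`, `j' = #{s' ∈ S : s' > n}`; if `n ≤ -2` then
`-m = k + 1/2` with `k = -n-1 ≥ 1`, `-m ∈ supp(S,T)` iff `k ∉ T`, new pair
`(S, T ∪ {k})`, `j' = |S| + k - #{t ∈ T : t < k}`; otherwise `0`. -/
noncomputable def AstarBasis (m : ℚ) (ST : Finset ℕ+ × Finset ℕ+) : Wedge :=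
  if m.den = 2 then
    let n : ℤ := ⌊m⌋
    if hn : 1 ≤ n then
      let s : ℕ+ := ⟨n.toNat, by omega⟩
      if s ∈ ST.1 then
        (((n : ℂ)) * (-1) ^ ((ST.1.filter (s < ·)).card)) •
          Finsupp.single (ST.1.erase s, ST.2) (1 : ℂ)
      else 0
    else if hn' : n ≤ -2 then
      let k : ℕ+ := ⟨(-n - 1).toNat, by omega⟩
      if k ∈ ST.2 then 0
      else
        (((n : ℂ)) * (-1) ^ (ST.1.card + (-n - 1).toNat - (ST.2.filter (· < k)).card)) •
          Finsupp.single (ST.1, insert k ST.2) (1 : ℂ)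
    else 0
  else 0

/-- The operator `A(m)` on the semi-infinite wedge space `Λ`, extended linearly. -/
noncomputable def Aop (m : ℚ) : Wedge →ₗ[ℂ] Wedge :=
  Finsupp.lsum ℂ fun ST => LinearMap.toSpanSingleton ℂ Wedge (Abasis m ST)

/-- The operator `A*(m)` on the semi-infinite wedge space `Λ`, extended linearly. -/
noncomputable def AstarOp (m : ℚ) : Wedge →ₗ[ℂ] Wedge :=
  Finsupp.lsum ℂ fun ST => LinearMap.toSpanSingleton ℂ Wedge (AstarBasis m ST)

/-- The Fock space `F = ℂ[x_1, x_2, ...]`, a polynomial ring in countably many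
variables indexed by the positive integers. -/
abbrev Fock : Type := MvPolynomial ℕ+ ℂ

/-- Endomorphisms of the Fock space. -/
abbrev EndF : Type := Module.End ℂ Fock

/-- The Heisenberg operators on the Fock space: `H(-n)` is multiplication by `x_n`
and `H(n) = -4n ∂/∂x_n` for `n ≥ 1` (and `0` for `n = 0`, which is never used). -/
noncomputable def HF (n : ℤ) : EndF :=
  if hn : 1 ≤ n then ((-4 : ℂ) * (n : ℂ)) • (pderiv (⟨n.toNat, by omega⟩ : ℕ+)).toLinearMap
  else if hn' : n ≤ -1 then LinearMap.mulLeft ℂ (X (⟨(-n).toNat, by omega⟩ : ℕ+))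
  else 0

/-- `sgn true = -1`, `sgn false = 1`: the sign `∓` attached to the label `ε ∈ {+, -}`
(`ε = +` is `true`), as in `E^±_+(z) = exp(∓ Σ_{n>0} x_n z^n / (2n))`. -/
def sgn (ε : Bool) : ℂ := if ε then -1 else 1

/-- The coefficient of `z^k` in the exponential `exp(g(z)) = Σ_j g(z)^j / j!` of an
operator-valued formal power series `g` (with zero constant term, so that only the
terms `j ≤ k` contribute to the coefficient of `z^k`). -/
noncomputable def expCoeff (g : PowerSeries EndF) (k : ℕ) : EndF :=
  ∑ j ∈ Finset.range (k + 1), ((j.factorial : ℂ))⁻¹ • (PowerSeries.coeff k (g ^ j))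

/-- The series `∓ Σ_{n > 0} x_n z^n / (2n)` (multiplication operators). -/
noncomputable def dSeries (ε : Bool) : PowerSeries EndF :=
  PowerSeries.mk fun n =>
    if hn : 0 < n then sgn ε • (((2 * n : ℂ))⁻¹ • LinearMap.mulLeft ℂ (X (⟨n, hn⟩ : ℕ+)))
    else 0

/-- The series `∓ 2 Σ_{n > 0} (∂/∂x_n) w^n`, where `w` stands for `z^{-1}`. -/
noncomputable def cSeries (ε : Bool) : PowerSeries EndF :=
  PowerSeries.mk fun n =>
    if hn : 0 < n then sgn ε • ((2 : ℂ) • (pderiv (⟨n, hn⟩ : ℕ+)).toLinearMap)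
    else 0

/-- `d^ε_l`, the coefficient of `z^l` in `E^ε_+(z) = exp(∓ Σ_{n>0} x_n z^n/(2n))`. -/
noncomputable def dOp (ε : Bool) (l : ℕ) : EndF := expCoeff (dSeries ε) l

/-- `c^ε_k`, the coefficient of `z^{-k}` in `E^ε_-(z) = exp(∓ 2 Σ_{n>0} (∂/∂x_n) z^{-n})`. -/
noncomputable def cOp (ε : Bool) (k : ℕ) : EndF := expCoeff (cSeries ε) k

/-- The space `V = F ⊗ Λ ⊗ ℂ[ℤα]`, realized as finitely supported functions from
the basis `{v_{S,T} ⊗ e^{pα}}` of `Λ ⊗ ℂ[ℤα]` to the Fock space `F`: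
the index `((S,T), p)` records the basis vector `v_{S,T} ⊗ e^{pα}` and the value
is the `F`-coordinate, so `Finsupp.single ((S,T), p) f` is `f ⊗ v_{S,T} ⊗ e^{pα}`. -/
abbrev VV : Type := ((Finset ℕ+ × Finset ℕ+) × ℤ) →₀ Fock

/-- `emb w p f` is the element `f ⊗ w ⊗ e^{pα}` of `V` for `w ∈ Λ`. -/
noncomputable def emb (w : Wedge) (p : ℤ) (f : Fock) : VV :=
  w.sum fun ST c => Finsupp.single (ST, p) (c • f)

/-- The operator `X(m)` of the representation `π` on `V`:
`X(m)(f ⊗ v_{S,T} ⊗ e^{pα}) = Σ_{l,k ≥ 0} (d^+_l c^+_k f) ⊗ A(m+l-k-p-1/2) v_{S,T} ⊗ e^{(p+1)α}`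
(only finitely many summands are nonzero on each vector). -/
noncomputable def Xop (m : ℤ) : VV → VV := fun u =>
  u.sum fun STp f =>
    ∑ᶠ lk : ℕ × ℕ,
      emb (Abasis ((m : ℚ) + lk.1 - lk.2 - STp.2 - 1/2) STp.1) (STp.2 + 1)
        (dOp true lk.1 (cOp true lk.2 f))

/-- The operator `Y(m)` of the representation `π` on `V`:
`Y(m)(f ⊗ v_{S,T} ⊗ e^{pα}) = Σ_{l,k ≥ 0} (d^-_l c^-_k f) ⊗ A*(m+l-k+p-1/2) v_{S,T} ⊗ e^{(p-1)α}`. -/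
noncomputable def Yop (m : ℤ) : VV → VV := fun u =>
  u.sum fun STp f =>
    ∑ᶠ lk : ℕ × ℕ,
      emb (AstarBasis ((m : ℚ) + lk.1 - lk.2 + STp.2 - 1/2) STp.1) (STp.2 - 1)
        (dOp false lk.1 (cOp false lk.2 f))

/-- The operator `H(m)` of the representation `π` on `V`: for `m ≠ 0` it acts as
`H(m)` on the Fock factor, and `H(0)` acts on `f ⊗ v ⊗ e^{pα}` by the scalar `2p`. -/
noncomputable def HVop (m : ℤ) : VV → VV := fun u =>
  u.sum fun STp f =>
    Finsupp.single STp (if m = 0 then ((2 : ℂ) * (STp.2 : ℂ)) • f else HF m f)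

/-- The weight of a monomial `x₁^{a₁} x₂^{a₂} ⋯`, namely `Σ n aₙ`. -/
def wtMon (μ : ℕ+ →₀ ℕ) : ℚ := μ.sum fun n a => (n : ℚ) * a

/-- The degree of the basis vector `v_{S,T}` of `Λ`: `Σ_{s∈S} s + Σ_{t∈T} t`. -/
def degWedge (ST : Finset ℕ+ × Finset ℕ+) : ℚ :=
  (∑ s ∈ ST.1, (s : ℚ)) + ∑ t ∈ ST.2, (t : ℚ)

/-- The degree operator `d` of the representation `π` on `V`:
`d (f ⊗ v_{S,T} ⊗ e^{pα}) = (-wt(f) - deg(v_{S,T}) - p²/2) ⬝ (f ⊗ v_{S,T} ⊗ e^{pα})`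
on monomials `f`. -/
noncomputable def dV : VV → VV := fun u =>
  u.sum fun STp f =>
    Finsupp.single STp
      (∑ μ ∈ f.support,
        monomial μ
          ((((-(wtMon μ) - degWedge STp.1 - (STp.2 : ℚ) ^ 2 / 2 : ℚ) : ℂ)) * coeff μ f))

/-- The vacuum space `Ω = Λ ⊗ ℂ[ℤα]`, with basis `{v_{S,T} ⊗ e^{pα}}`. -/
abbrev Vac : Type := ((Finset ℕ+ × Finset ℕ+) × ℤ) →₀ ℂ

/-- `embVac w p` is the element `w ⊗ e^{pα}` of `Ω` for `w ∈ Λ`. -/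
noncomputable def embVac (w : Wedge) (p : ℤ) : Vac :=
  w.sum fun ST c => Finsupp.single (ST, p) c

/-- The operator `Z⁺(m)` on `Ω`: `Z⁺(m)(v ⊗ e^{pα}) = A(m-p-1/2)v ⊗ e^{(p+1)α}`. -/
noncomputable def Zplus (m : ℤ) : Vac → Vac := fun u =>
  u.sum fun STp c => c • embVac (Abasis ((m : ℚ) - STp.2 - 1/2) STp.1) (STp.2 + 1)

/-- The operator `Z⁻(m)` on `Ω`: `Z⁻(m)(v ⊗ e^{pα}) = A*(m+p-1/2)v ⊗ e^{(p-1)α}`. -/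
noncomputable def Zminus (m : ℤ) : Vac → Vac := fun u =>
  u.sum fun STp c => c • embVac (AstarBasis ((m : ℚ) + STp.2 - 1/2) STp.1) (STp.2 - 1)

/-- Extension to `V = F ⊗ Λ ⊗ ℂ[ℤα]` of an operator `e` on the Fock factor,
i.e. `e ⊗ 1 ⊗ 1`. -/
noncomputable def extF (e : EndF) : VV → VV := fun u =>
  u.sum fun STp f => Finsupp.single STp (e f)

/-- The operator `Z⁺(m) = Σ_{a,b≥0} (d⁻_a ⊗ 1 ⊗ 1) ∘ X(m+a-b) ∘ (c⁻_b ⊗ 1 ⊗ 1)` on `V`,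
the coefficient of `z^{-m}` in `E⁻₊(z) X(z) E⁻₋(z)` (only finitely many summands act
nontrivially on each vector). -/
noncomputable def ZplusV (m : ℤ) : VV → VV := fun u =>
  ∑ᶠ ab : ℕ × ℕ,
    extF (dOp false ab.1) (Xop (m + (ab.1 : ℤ) - (ab.2 : ℤ)) (extF (cOp false ab.2) u))

/-- The operator `Z⁻(m) = Σ_{a,b≥0} (d⁺_a ⊗ 1 ⊗ 1) ∘ Y(m+a-b) ∘ (c⁺_b ⊗ 1 ⊗ 1)` on `V`,
the coefficient of `z^{-m}` in `E⁺₊(z) Y(z) E⁺₋(z)`. -/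
noncomputable def ZminusV (m : ℤ) : VV → VV := fun u =>
  ∑ᶠ ab : ℕ × ℕ,
    extF (dOp true ab.1) (Yop (m + (ab.1 : ℤ) - (ab.2 : ℤ)) (extF (cOp true ab.2) u))

/-- `Ncount j` is the number of quadruples `(a, S, T, p)` with `a : ℤ_{≥1} → ℤ_{≥0}`
finitely supported, `S, T` finite subsets of the positive integers and `p ∈ ℤ`,
satisfying `2 Σ_{n≥1} n a(n) + 2 (Σ_{s∈S} s + Σ_{t∈T} t) + p² = j`; this is the
dimension of the eigenspace of `d` with eigenvalue `-j/2` on `V`. -/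
noncomputable def Ncount (j : ℕ) : ℕ :=
  Nat.card {q : (ℕ+ →₀ ℕ) × Finset ℕ+ × Finset ℕ+ × ℤ //
    2 * (q.1.sum fun n a => (n : ℤ) * a) +
      2 * ((∑ s ∈ q.2.1, (s : ℤ)) + ∑ t ∈ q.2.2.1, (t : ℤ)) + q.2.2.2 ^ 2 = (j : ℤ)}


/-! ### Auxiliary development -/

open PowerSeries in
lemma aux_coeff_pow_eq_zero {g : PowerSeries EndF} (h0 : PowerSeries.coeff 0 g = 0) :
    ∀ (j m : ℕ), m < j → PowerSeries.coeff m (g ^ j) = 0 := by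
  intro j
  induction j with
  | zero => intro m hm; omega
  | succ j ih =>
    intro m hm
    rw [pow_succ', PowerSeries.coeff_mul]
    apply Finset.sum_eq_zero
    rintro ⟨a, b⟩ hab
    rw [Finset.HasAntidiagonal.mem_antidiagonal] at hab
    rcases Nat.eq_zero_or_pos a with rfl | ha
    · simp [h0]
    · rw [ih b (by omega), mul_zero]

lemma aux_commute_coeff_pow {c : EndF} {g : PowerSeries EndF}
    (h : ∀ n, Commute c (PowerSeries.coeff n g)) (j : ℕ) :
    ∀ k, Commute c (PowerSeries.coeff k (g ^ j)) := by
  induction j with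
  | zero =>
    intro k
    rw [pow_zero, PowerSeries.coeff_one]
    split
    · exact Commute.one_right c
    · exact Commute.zero_right c
  | succ j ih =>
    intro k
    rw [pow_succ', PowerSeries.coeff_mul]
    exact Commute.sum_right _ _ _ fun p _ => (h p.1).mul_right (ih p.2)

lemma aux_commute_expCoeff {c : EndF} {g : PowerSeries EndF}
    (h : ∀ n, Commute c (PowerSeries.coeff n g)) (k : ℕ) :
    Commute c (expCoeff g k) := by
  unfold expCoeff
  exact Commute.sum_right _ _ _ fun j _ =>
    (aux_commute_coeff_pow h j k).smul_right _

lemma aux_sum_swap_tri {M : Type*} [AddCommMonoid M] (k : ℕ) (F : ℕ → ℕ → M) :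
    ∑ a ∈ Finset.range (k + 1), ∑ m ∈ Finset.Icc 1 (k - a), F a m =
      ∑ m ∈ Finset.Icc 1 k, ∑ a ∈ Finset.range (k - m + 1), F a m := by
  rw [Finset.sum_sigma', Finset.sum_sigma']
  refine Finset.sum_nbij' (fun x => ⟨x.2, x.1⟩) (fun x => ⟨x.2, x.1⟩) ?_ ?_
    (fun _ _ => rfl) (fun _ _ => rfl) (fun _ _ => rfl) <;>
      simp only [Finset.mem_sigma, Finset.mem_range, Finset.mem_Icc, Sigma.forall] <;>
        (intro a b hab; omega)

lemma aux_claimA {g : PowerSeries EndF}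
    (hc : ∀ a b, Commute (PowerSeries.coeff a g) (PowerSeries.coeff b g)) :
    ∀ (j k : ℕ), k • PowerSeries.coeff k (g ^ (j + 1)) =
      (j + 1) • ∑ n ∈ Finset.Icc 1 k, n •
        (PowerSeries.coeff n g * PowerSeries.coeff (k - n) (g ^ j)) := by
  intro j
  induction j with
  | zero =>
    intro k
    rcases Nat.eq_zero_or_pos k with rfl | hk
    · simp
    · have hsum : ∑ n ∈ Finset.Icc 1 k, n •
          (PowerSeries.coeff n g * PowerSeries.coeff (k - n) (g ^ 0)) =
            k • PowerSeries.coeff k g := by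
        rw [Finset.sum_eq_single k
          (fun n hn hne => by
            rw [Finset.mem_Icc] at hn
            rw [pow_zero, PowerSeries.coeff_one, if_neg (by omega), mul_zero, smul_zero])
          (fun h => absurd (Finset.mem_Icc.2 ⟨hk, le_refl k⟩) h)]
        rw [Nat.sub_self, pow_zero, PowerSeries.coeff_one, if_pos rfl, mul_one]
      rw [hsum]
      simp only [zero_add, pow_one, one_nsmul]
  | succ j ih =>
    intro k
    have hexp : ∀ (i N : ℕ), PowerSeries.coeff N (g ^ (i + 1)) =
        ∑ a ∈ Finset.range (N + 1),
          PowerSeries.coeff a g * PowerSeries.coeff (N - a) (g ^ i) := by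
      intro i N
      rw [pow_succ', PowerSeries.coeff_mul, Finset.Nat.sum_antidiagonal_eq_sum_range_succ_mk]
    have hIccsub : Finset.Icc 1 k ⊆ Finset.range (k + 1) := by
      intro x hx
      rw [Finset.mem_Icc] at hx
      rw [Finset.mem_range]
      omega
    calc k • PowerSeries.coeff k (g ^ (j + 2))
        = ∑ a ∈ Finset.range (k + 1),
            k • (PowerSeries.coeff a g * PowerSeries.coeff (k - a) (g ^ (j + 1))) := by
          rw [hexp (j + 1) k, Finset.smul_sum]
      _ = ∑ a ∈ Finset.range (k + 1),
            (a • (PowerSeries.coeff a g * PowerSeries.coeff (k - a) (g ^ (j + 1)))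
              + PowerSeries.coeff a g *
                  ((k - a) • PowerSeries.coeff (k - a) (g ^ (j + 1)))) := by
          refine Finset.sum_congr rfl fun a ha => ?_
          rw [Finset.mem_range] at ha
          rw [mul_smul_comm, ← add_nsmul]
          congr 1
          omega
      _ = (∑ a ∈ Finset.range (k + 1),
              a • (PowerSeries.coeff a g * PowerSeries.coeff (k - a) (g ^ (j + 1))))
            + ∑ a ∈ Finset.range (k + 1), PowerSeries.coeff a g *
                ((k - a) • PowerSeries.coeff (k - a) (g ^ (j + 1))) :=
          Finset.sum_add_distrib
      _ = (∑ n ∈ Finset.Icc 1 k, n •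
              (PowerSeries.coeff n g * PowerSeries.coeff (k - n) (g ^ (j + 1))))
            + (j + 1) • ∑ n ∈ Finset.Icc 1 k, n •
              (PowerSeries.coeff n g * PowerSeries.coeff (k - n) (g ^ (j + 1))) := by
          congr 1
          · exact (Finset.sum_subset hIccsub (fun x hx hnx => by
              have hx0 : x = 0 := by
                rw [Finset.mem_range] at hx
                simp only [Finset.mem_Icc] at hnx
                omega
              rw [hx0, zero_nsmul])).symm
          · -- the inductive part
            calc ∑ a ∈ Finset.range (k + 1), PowerSeries.coeff a g *
                    ((k - a) • PowerSeries.coeff (k - a) (g ^ (j + 1)))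
                = ∑ a ∈ Finset.range (k + 1), (j + 1) •
                    ∑ m ∈ Finset.Icc 1 (k - a), m •
                      (PowerSeries.coeff a g * (PowerSeries.coeff m g *
                        PowerSeries.coeff (k - a - m) (g ^ j))) := by
                  refine Finset.sum_congr rfl fun a ha => ?_
                  rw [ih (k - a), mul_smul_comm, Finset.mul_sum]
                  congr 1
                  refine Finset.sum_congr rfl fun m hm => ?_
                  rw [mul_smul_comm]
              _ = (j + 1) • ∑ a ∈ Finset.range (k + 1),
                    ∑ m ∈ Finset.Icc 1 (k - a), m •
                      (PowerSeries.coeff m g * (PowerSeries.coeff a g *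
                        PowerSeries.coeff (k - a - m) (g ^ j))) := by
                  rw [← Finset.smul_sum]
                  congr 1
                  refine Finset.sum_congr rfl fun a _ => Finset.sum_congr rfl fun m _ => ?_
                  rw [← mul_assoc, (hc a m).eq, mul_assoc]
              _ = (j + 1) • ∑ m ∈ Finset.Icc 1 k,
                    ∑ a ∈ Finset.range (k - m + 1), m •
                      (PowerSeries.coeff m g * (PowerSeries.coeff a g *
                        PowerSeries.coeff (k - a - m) (g ^ j))) := by
                  rw [aux_sum_swap_tri]
              _ = (j + 1) • ∑ m ∈ Finset.Icc 1 k, m •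
                    (PowerSeries.coeff m g * PowerSeries.coeff (k - m) (g ^ (j + 1))) := by
                  congr 1
                  refine Finset.sum_congr rfl fun m hm => ?_
                  rw [hexp j (k - m), Finset.mul_sum, Finset.smul_sum]
                  refine Finset.sum_congr rfl fun a ha => ?_
                  have hidx : k - a - m = k - m - a := by omega
                  rw [hidx]
      _ = (j + 2) • ∑ n ∈ Finset.Icc 1 k, n •
            (PowerSeries.coeff n g * PowerSeries.coeff (k - n) (g ^ (j + 1))) := by
          rw [add_comm]
          conv_rhs => rw [show (j + 2) = (j + 1) + 1 from rfl, succ_nsmul]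

lemma aux_recur {g : PowerSeries EndF} (h0 : PowerSeries.coeff 0 g = 0)
    (hc : ∀ a b, Commute (PowerSeries.coeff a g) (PowerSeries.coeff b g)) (k : ℕ) :
    (k : ℂ) • expCoeff g k =
      ∑ n ∈ Finset.Icc 1 k, (n : ℂ) • (PowerSeries.coeff n g * expCoeff g (k - n)) := by
  rw [Nat.cast_smul_eq_nsmul]
  unfold expCoeff
  rw [Finset.smul_sum]
  have hterm : ∀ j, k • (((j.factorial : ℂ))⁻¹ • PowerSeries.coeff k (g ^ j)) =
      ((j.factorial : ℂ))⁻¹ • (k • PowerSeries.coeff k (g ^ j)) := fun j =>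
    (smul_comm _ _ _)
  simp only [hterm]
  rw [Finset.sum_range_succ']
  have hzero : ((Nat.factorial 0 : ℂ))⁻¹ • (k • PowerSeries.coeff k (g ^ 0)) = 0 := by
    rcases Nat.eq_zero_or_pos k with rfl | hk
    · rw [zero_nsmul, smul_zero]
    · rw [pow_zero, PowerSeries.coeff_one, if_neg (by omega), nsmul_zero, smul_zero]
  rw [hzero, add_zero]
  have hstep : ∀ j, (((j + 1).factorial : ℂ))⁻¹ • (k • PowerSeries.coeff k (g ^ (j + 1))) =
      ∑ n ∈ Finset.Icc 1 k, ((j.factorial : ℂ))⁻¹ • (n : ℂ) •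
        (PowerSeries.coeff n g * PowerSeries.coeff (k - n) (g ^ j)) := by
    intro j
    rw [aux_claimA hc j k, ← Nat.cast_smul_eq_nsmul ℂ (j + 1), smul_smul, Finset.smul_sum]
    refine Finset.sum_congr rfl fun n hn => ?_
    rw [← Nat.cast_smul_eq_nsmul ℂ n, smul_smul, smul_smul]
    congr 1
    have hf0 : ((j.factorial : ℕ) : ℂ) ≠ 0 := Nat.cast_ne_zero.2 (Nat.factorial_ne_zero j)
    have hj1 : ((j + 1 : ℕ) : ℂ) ≠ 0 := Nat.cast_ne_zero.2 (Nat.succ_ne_zero j)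
    have key : (((j + 1).factorial : ℕ) : ℂ) = ((j + 1 : ℕ) : ℂ) * ((j.factorial : ℕ) : ℂ) := by
      exact_mod_cast congrArg (fun t : ℕ => (t : ℂ)) (Nat.factorial_succ j)
    rw [key, mul_inv]
    have hj1' : (j : ℂ) + 1 ≠ 0 := by push_cast at hj1; exact hj1
    field_simp
  rw [Finset.sum_congr rfl fun j _ => hstep j, Finset.sum_comm]
  refine Finset.sum_congr rfl fun n hn => ?_
  rw [Finset.mem_Icc] at hn
  have hsub : Finset.range (k - n + 1) ⊆ Finset.range k := by
    intro x hx
    rw [Finset.mem_range] at hx ⊢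
    omega
  rw [Finset.sum_subset hsub (fun x hx hnx => by
    rw [Finset.mem_range] at hx hnx
    rw [aux_coeff_pow_eq_zero h0 x (k - n) ?_, smul_zero]
    omega)]
  rw [Finset.mul_sum, Finset.smul_sum]
  refine Finset.sum_congr rfl fun j _ => ?_
  rw [mul_smul_comm, smul_comm]

/-! ### Coefficients of the concrete series -/

lemma aux_coeff_dSeries (ε : Bool) (n : ℕ) :
    PowerSeries.coeff n (dSeries ε) =
      if hn : 0 < n then sgn ε • (((2 * n : ℂ))⁻¹ • LinearMap.mulLeft ℂ (X (σ := ℕ+) (⟨n, hn⟩ : ℕ+)))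
      else 0 := by
  rw [dSeries, PowerSeries.coeff_mk]
  rfl

lemma aux_coeff_cSeries (ε : Bool) (n : ℕ) :
    PowerSeries.coeff n (cSeries ε) =
      if hn : 0 < n then sgn ε • ((2 : ℂ) • (pderiv (σ := ℕ+) (⟨n, hn⟩ : ℕ+)).toLinearMap)
      else 0 := by
  rw [cSeries, PowerSeries.coeff_mk]
  rfl

lemma aux_dSeries_zero (ε : Bool) : PowerSeries.coeff 0 (dSeries ε) = 0 := by
  rw [aux_coeff_dSeries, dif_neg (lt_irrefl 0)]

lemma aux_cSeries_zero (ε : Bool) : PowerSeries.coeff 0 (cSeries ε) = 0 := by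
  rw [aux_coeff_cSeries, dif_neg (lt_irrefl 0)]

lemma aux_mulLeft_commute (a b : Fock) :
    Commute (S := EndF) (LinearMap.mulLeft ℂ a) (LinearMap.mulLeft ℂ b) := by
  refine LinearMap.ext fun p => ?_
  simp only [Module.End.mul_apply, LinearMap.mulLeft_apply]
  ring

lemma aux_pderiv_pderiv (i j : ℕ+) (p : Fock) :
    pderiv i (pderiv j p) = pderiv j (pderiv i p) := by
  induction p using MvPolynomial.induction_on' with
  | monomial μ a =>
    rcases eq_or_ne i j with rfl | hij
    · rfl
    · rw [pderiv_monomial, pderiv_monomial, pderiv_monomial, pderiv_monomial]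
      have harg : μ - Finsupp.single j 1 - Finsupp.single i 1 =
          μ - Finsupp.single i 1 - Finsupp.single j 1 := by
        ext x
        simp only [Finsupp.tsub_apply, Finsupp.single_apply]
        omega
      have hcoeffj : (μ - Finsupp.single j 1 : ℕ+ →₀ ℕ) i = μ i := by
        rw [Finsupp.tsub_apply, Finsupp.single_eq_of_ne hij]
        omega 
      have hcoeffi : (μ - Finsupp.single i 1 : ℕ+ →₀ ℕ) j = μ j := by
        rw [Finsupp.tsub_apply, Finsupp.single_eq_of_ne (Ne.symm hij)]
        omega
      rw [harg, hcoeffj, hcoeffi]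
      congr 1
      ring
  | add p q hp hq => simp only [map_add, hp, hq]

set_option maxHeartbeats 1000000 in
lemma aux_pderiv_commute (i j : ℕ+) :
    Commute (S := EndF) ((pderiv i).toLinearMap : EndF) ((pderiv j).toLinearMap : EndF) := by
  refine LinearMap.ext fun p => ?_
  simp only [Module.End.mul_apply, LinearMap.coe_coe]
  exact aux_pderiv_pderiv i j p

lemma aux_comm_smul {a b : EndF} (h : Commute a b) (r s : ℂ) : Commute (r • a) (s • b) :=
  (h.smul_right s).smul_left r

lemma aux_comm_smul_r {a b : EndF} (h : Commute a b) (s : ℂ) : Commute a (s • b) :=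
  h.smul_right s

lemma aux_dSeries_commute (ε : Bool) (a b : ℕ) :
    Commute (PowerSeries.coeff a (dSeries ε)) (PowerSeries.coeff b (dSeries ε)) := by
  rw [aux_coeff_dSeries, aux_coeff_dSeries]
  split
  · split
    · exact aux_comm_smul (aux_comm_smul (aux_mulLeft_commute _ _) _ _) _ _
    · exact Commute.zero_right _
  · exact Commute.zero_left _

lemma aux_cSeries_commute (ε : Bool) (a b : ℕ) :
    Commute (PowerSeries.coeff a (cSeries ε)) (PowerSeries.coeff b (cSeries ε)) := by
  rw [aux_coeff_cSeries, aux_coeff_cSeries]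
  split
  · split
    · exact aux_comm_smul (aux_comm_smul (aux_pderiv_commute _ _) _ _) _ _
    · exact Commute.zero_right _
  · exact Commute.zero_left _

lemma aux_HF_neg (n : ℕ) (hn : 0 < n) :
    HF (-(n : ℤ)) = LinearMap.mulLeft ℂ (X (σ := ℕ+) (⟨n, hn⟩ : ℕ+)) := by
  rw [HF, dif_neg (by omega), dif_pos (by omega)]
  simp only [neg_neg, Int.toNat_natCast]

lemma aux_HF_pos (n : ℕ) (hn : 0 < n) :
    HF (n : ℤ) = ((-4 : ℂ) * (n : ℂ)) • ((pderiv (σ := ℕ+) (⟨n, hn⟩ : ℕ+)).toLinearMap : EndF) := by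
  rw [HF, dif_pos (by omega)]
  simp only [Int.toNat_natCast, Int.cast_natCast]
  rfl

lemma aux_smul_coeff_dSeries (ε : Bool) {n : ℕ} (hn : 0 < n) :
    (n : ℂ) • PowerSeries.coeff n (dSeries ε) =
      sgn ε • ((2 : ℂ)⁻¹ • HF (-(n : ℤ))) := by
  rw [aux_coeff_dSeries, dif_pos hn, aux_HF_neg n hn]
  simp only [smul_smul]
  congr 1
  have hn0 : (n : ℂ) ≠ 0 := Nat.cast_ne_zero.2 (by omega)
  field_simp

lemma aux_smul_coeff_cSeries (ε : Bool) {n : ℕ} (hn : 0 < n) :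
    (n : ℂ) • PowerSeries.coeff n (cSeries ε) =
      (-sgn ε) • ((2 : ℂ)⁻¹ • HF (n : ℤ)) := by
  rw [aux_coeff_cSeries, dif_pos hn, aux_HF_pos n hn]
  simp only [smul_smul]
  congr 1
  ring

lemma aux_dOp_recur (ε : Bool) (l : ℕ) :
    (l : ℂ) • (dOp ε l : EndF) =
      ∑ m ∈ Finset.Icc 1 l, sgn ε •
        (((2 : ℂ)⁻¹ • HF (-(m : ℤ))) * dOp ε (l - m)) := by
  rw [dOp, aux_recur (aux_dSeries_zero ε) (aux_dSeries_commute ε) l]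
  refine Finset.sum_congr rfl fun m hm => ?_
  rw [Finset.mem_Icc] at hm
  rw [← smul_mul_assoc, aux_smul_coeff_dSeries ε (by omega : 0 < m), smul_mul_assoc,
    smul_mul_assoc]
  rfl

lemma aux_cOp_recur (ε : Bool) (k : ℕ) :
    (k : ℂ) • (cOp ε k : EndF) =
      ∑ m ∈ Finset.Icc 1 k, (-sgn ε) •
        (((2 : ℂ)⁻¹ • HF (m : ℤ)) * cOp ε (k - m)) := by
  rw [cOp, aux_recur (aux_cSeries_zero ε) (aux_cSeries_commute ε) k]
  refine Finset.sum_congr rfl fun m hm => ?_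
  rw [Finset.mem_Icc] at hm
  rw [← smul_mul_assoc, aux_smul_coeff_cSeries ε (by omega : 0 < m), smul_mul_assoc,
    smul_mul_assoc]
  rfl

lemma aux_HFneg_commute_dOp (ε : Bool) (m : ℕ) (hm : 0 < m) (a : ℕ) :
    Commute (((2 : ℂ)⁻¹ • HF (-(m : ℤ))) : EndF) (dOp ε a) := by
  rw [dOp]
  refine aux_commute_expCoeff (fun n => ?_) a
  rw [aux_coeff_dSeries]
  split
  · rw [aux_HF_neg m hm]
    exact aux_comm_smul (aux_comm_smul_r (aux_mulLeft_commute _ _) _) _ _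
  · exact Commute.zero_right _

/-! ### Weight estimates -/

def wtn (μ : ℕ+ →₀ ℕ) : ℕ := μ.sum fun n a => (n : ℕ) * a

def wdeg (h : Fock) : ℕ := h.support.sup wtn

lemma aux_wtn_add (μ τ : ℕ+ →₀ ℕ) : wtn (μ + τ) = wtn μ + wtn τ :=
  Finsupp.sum_add_index' (fun a => by simp) (fun a b₁ b₂ => by ring)

lemma aux_wtn_single (n : ℕ+) : wtn (Finsupp.single n 1) = (n : ℕ) := by
  rw [wtn, Finsupp.sum_single_index] <;> simp

lemma aux_wtn_le_wdeg {h : Fock} {μ : ℕ+ →₀ ℕ} (hμ : μ ∈ h.support) : wtn μ ≤ wdeg h :=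
  Finset.le_sup hμ

lemma aux_pderiv_support_wt (n : ℕ+) (h : Fock) :
    ∀ μ ∈ (pderiv n h).support, wtn μ + (n : ℕ) ≤ wdeg h := by
  intro μ hμ
  have hrw : pderiv n h =
      ∑ ν ∈ h.support, monomial (ν - Finsupp.single n 1) (coeff ν h * ν n) := by
    conv_lhs => rw [h.as_sum]
    rw [map_sum]
    exact Finset.sum_congr rfl fun ν _ => pderiv_monomial
  rw [hrw] at hμ
  obtain ⟨ν, hν, hμν⟩ := Finset.mem_biUnion.1 (MvPolynomial.support_sum hμ)
  have hsub := MvPolynomial.support_monomial_subset hμν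
  rw [Finset.mem_singleton] at hsub
  subst hsub
  have hνn : ν n ≠ 0 := by
    intro h0
    rw [h0] at hμν
    simp at hμν
  have hdecomp : ν = (ν - Finsupp.single n 1) + Finsupp.single n 1 := by
    ext x
    rcases eq_or_ne x n with rfl | hx
    · have hx1 : ν x ≠ 0 := hνn
      simp only [Finsupp.add_apply, Finsupp.tsub_apply, Finsupp.single_eq_same]
      omega
    · simp only [Finsupp.add_apply, Finsupp.tsub_apply,
        Finsupp.single_eq_of_ne hx]
      omega
  calc wtn (ν - Finsupp.single n 1) + (n : ℕ)
      = wtn ν := by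
        conv_rhs => rw [hdecomp]
        rw [aux_wtn_add, aux_wtn_single]
    _ ≤ wdeg h := aux_wtn_le_wdeg hν

lemma aux_cpow_wt (ε : Bool) (j : ℕ) :
    ∀ (k : ℕ) (h : Fock), ∀ μ ∈ ((PowerSeries.coeff k ((cSeries ε) ^ j)) h).support,
      wtn μ + k ≤ wdeg h := by
  induction j with
  | zero =>
    intro k h μ hμ
    rw [pow_zero, PowerSeries.coeff_one] at hμ
    rcases eq_or_ne k 0 with rfl | hk
    · rw [if_pos rfl] at hμ
      simpa using aux_wtn_le_wdeg (h := h) (μ := μ) hμ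
    · rw [if_neg hk] at hμ
      simp at hμ
  | succ j ih =>
    intro k h μ hμ
    rw [pow_succ', PowerSeries.coeff_mul, LinearMap.sum_apply] at hμ
    obtain ⟨p, hp, hμp⟩ := Finset.mem_biUnion.1 (MvPolynomial.support_sum hμ)
    rw [Finset.HasAntidiagonal.mem_antidiagonal] at hp
    rw [Module.End.mul_apply] at hμp
    rcases Nat.eq_zero_or_pos p.1 with h1 | h1
    · rw [h1, aux_cSeries_zero] at hμp
      simp at hμp
    · rw [aux_coeff_cSeries, dif_pos h1] at hμp
      set h' := (PowerSeries.coeff p.2 ((cSeries ε) ^ j)) h with hh'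
      have e1 : ((sgn ε • ((2 : ℂ) • (pderiv (σ := ℕ+) (⟨p.1, h1⟩ : ℕ+)).toLinearMap)) : EndF) h' =
          sgn ε • ((2 : ℂ) • (pderiv (σ := ℕ+) (⟨p.1, h1⟩ : ℕ+) h')) := rfl
      rw [e1] at hμp
      have hμp' := MvPolynomial.support_smul (MvPolynomial.support_smul hμp)
      have hwt1 : wtn μ + p.1 ≤ wdeg h' := aux_pderiv_support_wt _ h' μ hμp'
      have hne : h' ≠ 0 := by
        intro h0
        rw [h0] at hμp'
        simp at hμp'
      obtain ⟨ν, hν, hνe⟩ := Finset.exists_mem_eq_sup h'.support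
        (Finset.nonempty_iff_ne_empty.2 (mt MvPolynomial.support_eq_empty.1 hne)) wtn
      have hwt2 : wtn ν + p.2 ≤ wdeg h := ih p.2 h ν hν
      have : wdeg h' = wtn ν := hνe
      omega

lemma aux_cOp_wt (ε : Bool) (k : ℕ) (h : Fock) :
    ∀ μ ∈ (cOp ε k h).support, wtn μ + k ≤ wdeg h := by
  intro μ hμ
  rw [cOp, expCoeff, LinearMap.sum_apply] at hμ
  obtain ⟨j, hj, hμj⟩ := Finset.mem_biUnion.1 (MvPolynomial.support_sum hμ)
  rw [LinearMap.smul_apply] at hμj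
  exact aux_cpow_wt ε j k h μ (MvPolynomial.support_smul hμj)

lemma aux_cOp_eq_zero (ε : Bool) {k : ℕ} {h : Fock} (hk : wdeg h < k) : cOp ε k h = 0 := by
  by_contra hne
  obtain ⟨μ, hμ⟩ := Finset.nonempty_iff_ne_empty.2 (mt MvPolynomial.support_eq_empty.1 hne)
  have := aux_cOp_wt ε k h μ hμ
  omega

lemma aux_pderiv_cOp_wt (ε : Bool) {n : ℕ+} {k : ℕ} {h : Fock}
    (hne : pderiv n (cOp ε k h) ≠ 0) : (n : ℕ) + k ≤ wdeg h := by
  obtain ⟨μ, hμ⟩ := Finset.nonempty_iff_ne_empty.2 (mt MvPolynomial.support_eq_empty.1 hne)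
  have h1 : wtn μ + (n : ℕ) ≤ wdeg (cOp ε k h) := aux_pderiv_support_wt n _ μ hμ
  have hc : cOp ε k h ≠ 0 := by
    intro h0
    rw [h0] at hne
    simp at hne
  obtain ⟨ν, hν, hνe⟩ := Finset.exists_mem_eq_sup (cOp ε k h).support
    (Finset.nonempty_iff_ne_empty.2 (mt MvPolynomial.support_eq_empty.1 hc)) wtn
  have h2 : wtn ν + k ≤ wdeg h := aux_cOp_wt ε k h ν hν
  have : wdeg (cOp ε k h) = wtn ν := hνe
  omega


theorem statement5 (ε : Bool) (r : ℤ) (f : Fock) :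
    {p : ℕ × ℕ | (p.1 : ℤ) - (p.2 : ℤ) = r ∧ dOp ε p.1 (cOp ε p.2 f) ≠ 0}.Finite ∧
    {q : ℕ × ℤ × ℕ | q.2.1 ≠ 0 ∧ (q.1 : ℤ) - (q.2.2 : ℤ) - q.2.1 = r ∧
        dOp ε q.1 (((2 : ℂ)⁻¹ • HF q.2.1) (cOp ε q.2.2 f)) ≠ 0}.Finite ∧
    (r : ℂ) • (∑ᶠ p ∈ {p : ℕ × ℕ | (p.1 : ℤ) - (p.2 : ℤ) = r},
        dOp ε p.1 (cOp ε p.2 f)) =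
      sgn ε • ∑ᶠ q ∈ {q : ℕ × ℤ × ℕ | q.2.1 ≠ 0 ∧ (q.1 : ℤ) - (q.2.2 : ℤ) - q.2.1 = r},
        dOp ε q.1 (((2 : ℂ)⁻¹ • HF q.2.1) (cOp ε q.2.2 f)) := by
  classical
  -- basic vanishing facts
  have k_bound : ∀ (l k : ℕ), dOp ε l (cOp ε k f) ≠ 0 → k ≤ wdeg f := by
    intro l k h
    by_contra hk
    rw [aux_cOp_eq_zero ε (by omega), map_zero] at h
    exact h rfl
  have T_kb : ∀ (l : ℕ) (n : ℤ) (k : ℕ),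
      dOp ε l (((2 : ℂ)⁻¹ • HF n) (cOp ε k f)) ≠ 0 → k ≤ wdeg f := by
    intro l n k h
    by_contra hk
    rw [aux_cOp_eq_zero ε (by omega), map_zero, map_zero] at h
    exact h rfl
  have T_pos : ∀ (l : ℕ) (n : ℤ) (k : ℕ), 1 ≤ n →
      dOp ε l (((2 : ℂ)⁻¹ • HF n) (cOp ε k f)) ≠ 0 → n.toNat + k ≤ wdeg f := by
    intro l n k hn h
    have hinner : ((2 : ℂ)⁻¹ • HF n) (cOp ε k f) ≠ 0 := by
      intro h0
      rw [h0, map_zero] at h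
      exact h rfl
    obtain ⟨m, rfl⟩ : ∃ m : ℕ, n = (m : ℤ) := ⟨n.toNat, by omega⟩
    have hm1 : 0 < m := by omega
    have happ : ((2 : ℂ)⁻¹ • HF (m : ℤ)) (cOp ε k f)
        = ((2 : ℂ)⁻¹ * ((-4 : ℂ) * (m : ℂ))) •
            ((pderiv (σ := ℕ+) (⟨m, hm1⟩ : ℕ+)) (cOp ε k f)) := by
      rw [aux_HF_pos m hm1, smul_smul]
      rfl
    have hp : (pderiv (σ := ℕ+) (⟨m, hm1⟩ : ℕ+)) (cOp ε k f) ≠ 0 := by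
      intro h0
      apply hinner
      rw [happ, h0, smul_zero]
    have h5 : m + k ≤ wdeg f := aux_pderiv_cOp_wt ε hp
    omega
  -- finiteness
  have hfin1 : {p : ℕ × ℕ | (p.1 : ℤ) - (p.2 : ℤ) = r ∧ dOp ε p.1 (cOp ε p.2 f) ≠ 0}.Finite := by
    apply Set.Finite.subset (Set.Finite.image (fun k : ℕ => ((r + (k : ℤ)).toNat, k))
      (Set.finite_Icc 0 (wdeg f)))
    rintro ⟨l, k⟩ ⟨hlk, hne⟩
    dsimp only at hlk hne
    have hk : k ≤ wdeg f := k_bound l k hne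
    refine ⟨k, ⟨Nat.zero_le k, hk⟩, ?_⟩
    have h7 : (r + (k : ℤ)).toNat = l := by omega
    exact Prod.ext_iff.2 ⟨h7, rfl⟩
  have hfin2 : {q : ℕ × ℤ × ℕ | q.2.1 ≠ 0 ∧ (q.1 : ℤ) - (q.2.2 : ℤ) - q.2.1 = r ∧
      dOp ε q.1 (((2 : ℂ)⁻¹ • HF q.2.1) (cOp ε q.2.2 f)) ≠ 0}.Finite := by
    apply Set.Finite.subset (Set.Finite.image
      (fun p : ℕ × ℕ => (p.1, (p.1 : ℤ) - (p.2 : ℤ) - r, p.2))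
      (Set.Finite.prod (Set.finite_Icc 0 ((r + (wdeg f : ℤ)).toNat)) (Set.finite_Icc 0 (wdeg f))))
    rintro ⟨l, n, k⟩ ⟨hn0, hlnk, hne⟩
    dsimp only at hn0 hlnk hne
    have hk : k ≤ wdeg f := T_kb l n k hne
    have hl : (l : ℤ) ≤ r + (wdeg f : ℤ) := by
      rcases lt_or_ge n 0 with hneg | hposn
      · omega
      · have := T_pos l n k (by omega) hne
        omega
    refine ⟨(l, k), ⟨⟨Nat.zero_le _, by omega⟩, ⟨Nat.zero_le _, hk⟩⟩, ?_⟩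
    have h8 : (l : ℤ) - (k : ℤ) - r = n := by omega
    exact Prod.ext_iff.2 ⟨rfl, Prod.ext_iff.2 ⟨h8, rfl⟩⟩
  refine ⟨hfin1, hfin2, ?_⟩
  -- index sets
  set K1 : Finset ℕ := (Finset.range (wdeg f + 1)).filter (fun k => 0 ≤ r + (k : ℤ)) with hK1
  set lf : ℕ → ℕ := fun k => (r + (k : ℤ)).toNat with hlf
  have hmemK1 : ∀ k, k ∈ K1 ↔ (k ≤ wdeg f ∧ 0 ≤ r + (k : ℤ)) := by
    intro k
    rw [hK1, Finset.mem_filter, Finset.mem_range]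
    omega
  have hlfk : ∀ k : ℕ, 0 ≤ r + (k : ℤ) → ((lf k : ℕ) : ℤ) = r + k := by
    intro k hk
    simp only [hlf]
    omega
  -- left-hand side as a finite sum
  have hL : (∑ᶠ p ∈ {p : ℕ × ℕ | (p.1 : ℤ) - (p.2 : ℤ) = r}, dOp ε p.1 (cOp ε p.2 f))
      = ∑ k ∈ K1, dOp ε (lf k) (cOp ε k f) := by
    rw [← Finset.sum_image (f := fun p : ℕ × ℕ => dOp ε p.1 (cOp ε p.2 f))
      (s := K1) (g := fun k => (lf k, k))
      (fun x _ y _ h => by simpa using (Prod.ext_iff.1 h).2)]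
    apply finsum_mem_eq_sum_of_inter_support_eq
    ext ⟨l, k⟩
    simp only [Set.mem_inter_iff, Set.mem_setOf_eq, Function.mem_support, Finset.coe_image,
      Set.mem_image, Finset.mem_coe]
    constructor
    · rintro ⟨hlk, hne⟩
      have hk : k ≤ wdeg f := k_bound l k hne
      refine ⟨⟨k, (hmemK1 k).2 ⟨hk, by omega⟩, ?_⟩, hne⟩
      have h7 : lf k = l := by simp only [hlf]; omega
      exact Prod.ext_iff.2 ⟨h7, rfl⟩
    · rintro ⟨⟨k', hk', heq⟩, hne⟩
      simp only [Prod.mk.injEq] at heq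
      obtain ⟨h1, rfl⟩ := heq
      have hk'2 := (hmemK1 k').1 hk'
      refine ⟨?_, hne⟩
      have := hlfk k' hk'2.2
      omega
  -- per-index identity
  have hkey : ∀ k ∈ K1, (r : ℂ) • dOp ε (lf k) (cOp ε k f)
      = sgn ε • ((∑ m ∈ Finset.Icc 1 (lf k),
            dOp ε (lf k - m) (((2 : ℂ)⁻¹ • HF (-(m : ℤ))) (cOp ε k f)))
          + ∑ m ∈ Finset.Icc 1 k,
            dOp ε (lf k) (((2 : ℂ)⁻¹ • HF ((m : ℕ) : ℤ)) (cOp ε (k - m) f))) := by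
    intro k hk
    obtain ⟨hkW, hkr⟩ := (hmemK1 k).1 hk
    have hA : ((lf k : ℕ) : ℂ) • dOp ε (lf k) (cOp ε k f)
        = sgn ε • ∑ m ∈ Finset.Icc 1 (lf k),
            dOp ε (lf k - m) (((2 : ℂ)⁻¹ • HF (-(m : ℤ))) (cOp ε k f)) := by
      have h2 := LinearMap.congr_fun (aux_dOp_recur ε (lf k)) (cOp ε k f)
      rw [LinearMap.smul_apply, LinearMap.sum_apply] at h2
      rw [h2, Finset.smul_sum]
      refine Finset.sum_congr rfl fun m hm => ?_
      rw [Finset.mem_Icc] at hm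
      have hcomm := (aux_HFneg_commute_dOp ε m (by omega) (lf k - m))
      rw [LinearMap.smul_apply, hcomm.eq, Module.End.mul_apply]
    have hB : ((k : ℕ) : ℂ) • dOp ε (lf k) (cOp ε k f)
        = (-sgn ε) • ∑ m ∈ Finset.Icc 1 k,
            dOp ε (lf k) (((2 : ℂ)⁻¹ • HF ((m : ℕ) : ℤ)) (cOp ε (k - m) f)) := by
      have h3 := LinearMap.congr_fun (aux_cOp_recur ε k) f
      rw [LinearMap.smul_apply, LinearMap.sum_apply] at h3
      have h4 : ((k : ℕ) : ℂ) • dOp ε (lf k) (cOp ε k f)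
          = dOp ε (lf k) (((k : ℕ) : ℂ) • cOp ε k f) := (map_smul _ _ _).symm
      rw [h4, h3, map_sum, Finset.smul_sum]
      refine Finset.sum_congr rfl fun m hm => ?_
      rw [LinearMap.smul_apply, Module.End.mul_apply, map_smul]
    have hscal : ((lf k : ℕ) : ℂ) - ((k : ℕ) : ℂ) = (r : ℂ) := by
      have h5 : ((lf k : ℕ) : ℤ) = r + k := hlfk k hkr
      have h6 : ((lf k : ℕ) : ℂ) = (((lf k : ℕ) : ℤ) : ℂ) := by push_cast; ring
      rw [h6, h5]
      push_cast
      ring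
    calc (r : ℂ) • dOp ε (lf k) (cOp ε k f)
        = ((lf k : ℕ) : ℂ) • dOp ε (lf k) (cOp ε k f)
            - ((k : ℕ) : ℂ) • dOp ε (lf k) (cOp ε k f) := by
          rw [← sub_smul, hscal]
      _ = sgn ε • (∑ m ∈ Finset.Icc 1 (lf k),
            dOp ε (lf k - m) (((2 : ℂ)⁻¹ • HF (-(m : ℤ))) (cOp ε k f)))
            - (-sgn ε) • ∑ m ∈ Finset.Icc 1 k,
              dOp ε (lf k) (((2 : ℂ)⁻¹ • HF ((m : ℕ) : ℤ)) (cOp ε (k - m) f)) := by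
          rw [hA, hB]
      _ = _ := by
          rw [neg_smul, sub_neg_eq_add, ← smul_add]
  -- right-hand side as a finite sum
  set t2a : Finset (ℕ × ℤ × ℕ) := K1.biUnion (fun k =>
    (Finset.Icc 1 (lf k)).image (fun m => (lf k - m, -(m : ℤ), k))) with ht2a
  set t2b : Finset (ℕ × ℤ × ℕ) := K1.biUnion (fun k =>
    (Finset.Icc 1 k).image (fun m : ℕ => (lf k, (m : ℤ), k - m))) with ht2b
  have hmem2a : ∀ q : ℕ × ℤ × ℕ, q ∈ t2a ↔
      ∃ k ∈ K1, ∃ m, (1 ≤ m ∧ m ≤ lf k) ∧ (lf k - m, -(m : ℤ), k) = q := by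
    intro q
    rw [ht2a, Finset.mem_biUnion]
    constructor
    · rintro ⟨k, hk, hq⟩
      rw [Finset.mem_image] at hq
      obtain ⟨m, hm, rfl⟩ := hq
      rw [Finset.mem_Icc] at hm
      exact ⟨k, hk, m, hm, rfl⟩
    · rintro ⟨k, hk, m, hm, rfl⟩
      exact ⟨k, hk, Finset.mem_image.2 ⟨m, Finset.mem_Icc.2 hm, rfl⟩⟩
  have hmem2b : ∀ q : ℕ × ℤ × ℕ, q ∈ t2b ↔
      ∃ k ∈ K1, ∃ m : ℕ, (1 ≤ m ∧ m ≤ k) ∧ (lf k, (m : ℤ), k - m) = q := by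
    intro q
    rw [ht2b, Finset.mem_biUnion]
    constructor
    · rintro ⟨k, hk, hq⟩
      rw [Finset.mem_image] at hq
      obtain ⟨m, hm, rfl⟩ := hq
      rw [Finset.mem_Icc] at hm
      exact ⟨k, hk, m, hm, rfl⟩
    · rintro ⟨k, hk, m, hm, rfl⟩
      exact ⟨k, hk, Finset.mem_image.2 ⟨m, Finset.mem_Icc.2 hm, rfl⟩⟩
  have hR1 : (∑ᶠ q ∈ {q : ℕ × ℤ × ℕ | q.2.1 ≠ 0 ∧ (q.1 : ℤ) - (q.2.2 : ℤ) - q.2.1 = r},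
      dOp ε q.1 (((2 : ℂ)⁻¹ • HF q.2.1) (cOp ε q.2.2 f)))
      = ∑ q ∈ t2a ∪ t2b, dOp ε q.1 (((2 : ℂ)⁻¹ • HF q.2.1) (cOp ε q.2.2 f)) := by
    apply finsum_mem_eq_sum_of_inter_support_eq
    ext ⟨l, n, k⟩
    simp only [Set.mem_inter_iff, Set.mem_setOf_eq, Function.mem_support, Finset.coe_union,
      Set.mem_union, Finset.mem_coe]
    constructor
    · rintro ⟨⟨hn0, hlnk⟩, hne⟩
      have hk : k ≤ wdeg f := T_kb l n k hne
      refine ⟨?_, hne⟩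
      rcases lt_or_ge n 0 with hneg | hposn
      · -- n ≤ -1 : element of t2a
        left
        rw [hmem2a]
        refine ⟨k, (hmemK1 k).2 ⟨hk, by omega⟩, (-n).toNat, ⟨by omega, ?_⟩, ?_⟩
        · have := hlfk k (by omega)
          omega
        · have hlfe := hlfk k (by omega)
          refine Prod.ext_iff.2 ⟨?_, Prod.ext_iff.2 ⟨?_, ?_⟩⟩ <;> dsimp only <;> omega
      · -- n ≥ 1 : element of t2b
        right
        rw [hmem2b]
        have hwt := T_pos l n k (by omega) hne
        refine ⟨k + n.toNat, (hmemK1 _).2 ⟨by omega, by omega⟩, n.toNat, ⟨by omega, by omega⟩, ?_⟩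
        have hlfe := hlfk (k + n.toNat) (by omega)
        refine Prod.ext_iff.2 ⟨?_, Prod.ext_iff.2 ⟨?_, ?_⟩⟩ <;> dsimp only <;> omega
    · rintro ⟨hq, hne⟩
      refine ⟨?_, hne⟩
      rcases hq with hq | hq
      · rw [hmem2a] at hq
        obtain ⟨k', hk', m, hm, heq⟩ := hq
        have hk'2 := (hmemK1 k').1 hk'
        have hlfe := hlfk k' hk'2.2
        simp only [Prod.mk.injEq] at heq
        obtain ⟨h1, h2, rfl⟩ := heq
        constructor
        · omega
        · omega
      · rw [hmem2b] at hq
        obtain ⟨k', hk', m, hm, heq⟩ := hq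
        have hk'2 := (hmemK1 k').1 hk'
        have hlfe := hlfk k' hk'2.2
        simp only [Prod.mk.injEq] at heq
        obtain ⟨h1, h2, h3⟩ := heq
        constructor
        · omega
        · omega
  have hdisj : Disjoint t2a t2b := by
    rw [Finset.disjoint_left]
    intro q hqa hqb
    rw [hmem2a] at hqa
    rw [hmem2b] at hqb
    obtain ⟨k1, _, m1, hm1, heq1⟩ := hqa
    obtain ⟨k2, _, m2, hm2, heq2⟩ := hqb
    rw [← heq2] at heq1
    simp only [Prod.mk.injEq] at heq1
    omega
  have hlf_inj : ∀ a ∈ K1, ∀ b ∈ K1, lf a = lf b → a = b := by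
    intro a ha b hb hab
    have h1 := hlfk a ((hmemK1 a).1 ha).2
    have h2 := hlfk b ((hmemK1 b).1 hb).2
    omega
  have hsum2a : ∑ q ∈ t2a, dOp ε q.1 (((2 : ℂ)⁻¹ • HF q.2.1) (cOp ε q.2.2 f))
      = ∑ k ∈ K1, ∑ m ∈ Finset.Icc 1 (lf k),
          dOp ε (lf k - m) (((2 : ℂ)⁻¹ • HF (-(m : ℤ))) (cOp ε k f)) := by
    rw [ht2a, Finset.sum_biUnion]
    · refine Finset.sum_congr rfl fun k hk => ?_
      rw [Finset.sum_image (fun x _ y _ h => by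
        simp only [Prod.mk.injEq] at h
        omega)]
    · intro a ha b hb hab
      simp only [Function.onFun]
      rw [Finset.disjoint_left]
      intro q hqa hqb
      rw [Finset.mem_image] at hqa hqb
      obtain ⟨m1, _, rfl⟩ := hqa
      obtain ⟨m2, _, heq⟩ := hqb
      simp only [Prod.mk.injEq] at heq
      exact hab (by omega)
  have hsum2b : ∑ q ∈ t2b, dOp ε q.1 (((2 : ℂ)⁻¹ • HF q.2.1) (cOp ε q.2.2 f))
      = ∑ k ∈ K1, ∑ m ∈ Finset.Icc 1 k,
          dOp ε (lf k) (((2 : ℂ)⁻¹ • HF ((m : ℕ) : ℤ)) (cOp ε (k - m) f)) := by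
    rw [ht2b, Finset.sum_biUnion]
    · refine Finset.sum_congr rfl fun k hk => ?_
      rw [Finset.sum_image (fun x _ y _ h => by
        simp only [Prod.mk.injEq] at h
        omega)]
    · intro a ha b hb hab
      simp only [Function.onFun]
      rw [Finset.disjoint_left]
      intro q hqa hqb
      rw [Finset.mem_image] at hqa hqb
      obtain ⟨m1, _, rfl⟩ := hqa
      obtain ⟨m2, _, heq⟩ := hqb
      simp only [Prod.mk.injEq] at heq
      exact hab (hlf_inj b hb a ha (by omega)).symm
  rw [hL, hR1, Finset.sum_union hdisj, hsum2a, hsum2b, Finset.smul_sum, ← Finset.sum_add_distrib,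
    Finset.smul_sum]
  exact Finset.sum_congr rfl fun k hk => hkey k hk
end

section
/- The vector v₀ = 1 ⊗ v_{∅,∅} ⊗ e^{0·α} ∈ V satisfies X(0)v₀ = 0, Y(1)v₀ = 0, Y(0)v₀ = 0, H(0)v₀ = 0, and d·v₀ = 0; hence v₀ is a highest weight vector for the representation π of affine sl₂ at the critical level c = −2, of weight −2Λ₀ (the Chevalley generators act by e₀v₀ = Y(1)v₀ = 0, e₁v₀ = X(0)v₀ = 0, h₀v₀ = (−H(0)+c)v₀ = −2v₀, h₁v₀ = H(0)v₀ = 0). -/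
open MvPolynomial

lemma emb_zero (w : Wedge) (p : ℤ) : emb w p 0 = 0 := by
  simp [emb]

lemma emb_zero_wedge (p : ℤ) (f : Fock) : emb (0 : Wedge) p f = 0 := by
  simp [emb]

lemma pderiv_one' (n : ℕ+) :
    (pderiv n).toLinearMap (1 : Fock) = 0 := (pderiv n).map_one_eq_zero

lemma cSeries_coeff_one (ε : Bool) (n : ℕ) :
    (PowerSeries.coeff n (cSeries ε)) (1 : Fock) = 0 := by
  simp only [cSeries, PowerSeries.coeff_mk]
  split_ifs with h
  · have h2 : ((2:ℂ) • (pderiv (⟨n,h⟩:ℕ+)).toLinearMap) (1 : Fock) = 0 := by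
      calc ((2:ℂ) • (pderiv (⟨n,h⟩:ℕ+)).toLinearMap) (1 : Fock)
          = (2:ℂ) • ((pderiv (⟨n,h⟩:ℕ+)).toLinearMap (1 : Fock)) := rfl
        _ = 0 := by exact smul_eq_zero_of_right _ (pderiv_one' _)
    calc (sgn ε • ((2:ℂ) • (pderiv (⟨n,h⟩:ℕ+)).toLinearMap)) (1 : Fock)
        = sgn ε • (((2:ℂ) • (pderiv (⟨n,h⟩:ℕ+)).toLinearMap) (1 : Fock)) := rfl
      _ = 0 := by rw [h2, smul_zero]
  · simp

lemma cSeries_pow_coeff_one (ε : Bool) (j n : ℕ) (hj : j ≠ 0) :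
    (PowerSeries.coeff n ((cSeries ε) ^ j)) (1 : Fock) = 0 := by
  obtain ⟨j', rfl⟩ := Nat.exists_eq_succ_of_ne_zero hj
  rw [pow_succ, PowerSeries.coeff_mul]
  rw [LinearMap.coe_sum, Finset.sum_apply]
  apply Finset.sum_eq_zero
  intro p _
  rw [Module.End.mul_apply, cSeries_coeff_one, map_zero]

lemma cOp_one (ε : Bool) (k : ℕ) (hk : k ≠ 0) : (cOp ε k) (1 : Fock) = 0 := by
  unfold cOp expCoeff
  rw [LinearMap.coe_sum, Finset.sum_apply]
  apply Finset.sum_eq_zero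
  intro j _
  rw [LinearMap.smul_apply]
  rcases eq_or_ne j 0 with rfl | hj
  · rw [pow_zero]
    simp [PowerSeries.coeff_one, hk]
  · rw [cSeries_pow_coeff_one ε j k hj, smul_zero]

lemma Abasis_empty (m : ℚ) (h : -1 ≤ ⌊m⌋) :
    Abasis m ((∅ : Finset ℕ+), (∅ : Finset ℕ+)) = 0 := by
  unfold Abasis
  simp only []
  split_ifs <;> first | rfl | (exfalso; omega) | (exfalso; exact Finset.notMem_empty _ ‹_›) | simp_all

lemma AstarBasis_empty (m : ℚ) (h : -1 ≤ ⌊m⌋) :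
    AstarBasis m ((∅ : Finset ℕ+), (∅ : Finset ℕ+)) = 0 := by
  unfold AstarBasis
  simp only []
  split_ifs <;> first | rfl | (exfalso; omega) | (exfalso; exact Finset.notMem_empty _ ‹_›) | simp_all

theorem statement11 :
    ∀ v0 : VV, v0 = Finsupp.single ((∅, ∅), 0) 1 →
      Xop 0 v0 = 0 ∧ Yop 1 v0 = 0 ∧ Yop 0 v0 = 0 ∧ HVop 0 v0 = 0 ∧ dV v0 = 0 ∧
      -(HVop 0 v0) + (-2 : ℂ) • v0 = (-2 : ℂ) • v0 := by
  rintro v0 rfl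
  have hX : Xop 0 (Finsupp.single ((∅, ∅), 0) 1 : VV) = 0 := by
    unfold Xop
    rw [Finsupp.sum_single_index]
    · apply finsum_eq_zero_of_forall_eq_zero
      rintro ⟨l, k⟩
      rcases eq_or_ne k 0 with rfl | hk
      · rw [Abasis_empty, emb_zero_wedge]
        rw [Int.le_floor]
        push_cast
        linarith [Nat.cast_nonneg (α := ℚ) l]
      · rw [cOp_one _ _ hk, map_zero, emb_zero]
    · apply finsum_eq_zero_of_forall_eq_zero
      rintro ⟨l, k⟩
      rw [map_zero, map_zero, emb_zero]
  have hY1 : Yop 1 (Finsupp.single ((∅, ∅), 0) 1 : VV) = 0 := by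
    unfold Yop
    rw [Finsupp.sum_single_index]
    · apply finsum_eq_zero_of_forall_eq_zero
      rintro ⟨l, k⟩
      rcases eq_or_ne k 0 with rfl | hk
      · rw [AstarBasis_empty, emb_zero_wedge]
        rw [Int.le_floor]
        push_cast
        linarith [Nat.cast_nonneg (α := ℚ) l]
      · rw [cOp_one _ _ hk, map_zero, emb_zero]
    · apply finsum_eq_zero_of_forall_eq_zero
      rintro ⟨l, k⟩
      rw [map_zero, map_zero, emb_zero]
  have hY0 : Yop 0 (Finsupp.single ((∅, ∅), 0) 1 : VV) = 0 := by
    unfold Yop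
    rw [Finsupp.sum_single_index]
    · apply finsum_eq_zero_of_forall_eq_zero
      rintro ⟨l, k⟩
      rcases eq_or_ne k 0 with rfl | hk
      · rw [AstarBasis_empty, emb_zero_wedge]
        rw [Int.le_floor]
        push_cast
        linarith [Nat.cast_nonneg (α := ℚ) l]
      · rw [cOp_one _ _ hk, map_zero, emb_zero]
    · apply finsum_eq_zero_of_forall_eq_zero
      rintro ⟨l, k⟩
      rw [map_zero, map_zero, emb_zero]
  have hH : HVop 0 (Finsupp.single ((∅, ∅), 0) 1 : VV) = 0 := by
    unfold HVop
    rw [Finsupp.sum_single_index] <;> simp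
  have hd : dV (Finsupp.single ((∅, ∅), 0) 1 : VV) = 0 := by
    unfold dV
    rw [Finsupp.sum_single_index]
    · convert Finsupp.single_zero _
      apply Finset.sum_eq_zero
      intro mu hmu
      have hmu0 : mu = 0 := by
        have h1 : mu ∈ ({0} : Finset (ℕ+ →₀ ℕ)) := by
          have : (1 : Fock) = MvPolynomial.monomial 0 1 := by
            simp
          rw [this] at hmu
          exact MvPolynomial.support_monomial_subset hmu
        simpa using h1
      subst hmu0
      have : wtMon (0 : ℕ+ →₀ ℕ) = 0 := by simp [wtMon]
      simp [this, degWedge]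
    · simp
  refine ⟨hX, hY1, hY0, hH, hd, ?_⟩
  rw [hH, neg_zero, zero_add]
end

section
/- For all m, n ∈ ℤ and every basis vector w = v_{S,T} ⊗ e^{pα} of Ω, all but finitely many terms of the sums Σ_{k≥0} Z⁺(m−k)Z⁺(n+k)w and Σ_{k≥0} Z⁺(n−k)Z⁺(m+k)w vanish, and the two sums are equal. (This is the componentwise form of the generalized commutator relation Z⁺(z)Z⁺(w)(1−w/z)^{−1} − Z⁺(w)Z⁺(z)(1−z/w)^{−1} = 0 of the Z-algebra representation π_Ω.) -/
open MvPolynomial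

section Dev

lemma q_den (t : ℤ) : ((t : ℚ) - 1/2).den = 2 := by
  have h2 : ((-(1/2) : ℚ)).den = 2 := by norm_num
  have h := Rat.add_den_dvd (t : ℚ) (-(1/2))
  rw [Rat.den_intCast, one_mul, h2] at h
  have heq : (t:ℚ) + (-(1/2)) = (t:ℚ) - 1/2 := by ring
  rw [heq] at h
  rcases (Nat.prime_two.eq_one_or_self_of_dvd _ h) with h1 | h1
  · exfalso
    have hz := Rat.coe_int_num_of_den_eq_one h1
    have h3 : ((2 * ((t:ℚ) - 1/2).num : ℤ) : ℚ) = ((2*t - 1 : ℤ) : ℚ) := by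
      push_cast
      linear_combination (2:ℚ) * hz
    have h4 := Int.cast_injective (α := ℚ) h3
    omega
  · exact h1

lemma q_floor (t : ℤ) : ⌊(t:ℚ) - 1/2⌋ = t - 1 := by
  have heq : (t:ℚ) - 1/2 = ((t - 1 : ℤ) : ℚ) + 1/2 := by push_cast; ring
  have h0 : ⌊(1/2 : ℚ)⌋ = 0 := by
    rw [Int.floor_eq_zero_iff]
    constructor <;> norm_num
  rw [heq, Int.floor_intCast_add, h0, add_zero]

/-- `AbZ t` is `A(t - 1/2)` at the basis level. -/
noncomputable def AbZ (t : ℤ) (ST : Finset ℕ+ × Finset ℕ+) : Wedge :=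
  Abasis ((t : ℚ) - 1/2) ST

lemma AbZ_triv (t : ℤ) (h : t = 0 ∨ t = 1) (ST : Finset ℕ+ × Finset ℕ+) : AbZ t ST = 0 := by
  unfold AbZ Abasis
  rw [if_pos (q_den t)]
  simp only [q_floor t]
  rw [dif_neg (by omega : ¬ (1:ℤ) ≤ t - 1), dif_neg (by omega : ¬ t - 1 ≤ -2)]

lemma AbZ_pos_mem (t : ℤ) (ht : 2 ≤ t) (S T : Finset ℕ+) (k : ℕ+)
    (hk : (k:ℕ) = (t-1).toNat) (hmem : k ∈ T) :
    AbZ t (S, T) = (((t - 1 : ℤ) : ℂ) *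
        (-1) ^ (S.card + (t-1).toNat - (T.filter (· < k)).card)) •
      Finsupp.single (S, T.erase k) (1 : ℂ) := by
  unfold AbZ Abasis
  rw [if_pos (q_den t)]
  simp only [q_floor t]
  rw [dif_pos (by omega : (1:ℤ) ≤ t - 1)]
  have hkk : (⟨(t-1).toNat, by omega⟩ : ℕ+) = k := Subtype.ext hk.symm
  simp only [hkk]
  have hk' : ∀ h : 0 < ⌊(t:ℚ) - 1/2⌋.toNat, (⟨⌊(t:ℚ) - 1/2⌋.toNat, h⟩ : ℕ+) = k :=
    fun h => Subtype.ext (by show ⌊(t:ℚ) - 1/2⌋.toNat = (k:ℕ); rw [q_floor t]; omega)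
  simp only [hk']
  rw [if_pos hmem]

lemma AbZ_pos_not (t : ℤ) (ht : 2 ≤ t) (S T : Finset ℕ+) (k : ℕ+)
    (hk : (k:ℕ) = (t-1).toNat) (hmem : k ∉ T) : AbZ t (S, T) = 0 := by
  unfold AbZ Abasis
  rw [if_pos (q_den t)]
  simp only [q_floor t]
  rw [dif_pos (by omega : (1:ℤ) ≤ t - 1)]
  have hkk : (⟨(t-1).toNat, by omega⟩ : ℕ+) = k := Subtype.ext hk.symm
  simp only [hkk]
  have hk' : ∀ h : 0 < ⌊(t:ℚ) - 1/2⌋.toNat, (⟨⌊(t:ℚ) - 1/2⌋.toNat, h⟩ : ℕ+) = k :=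
    fun h => Subtype.ext (by show ⌊(t:ℚ) - 1/2⌋.toNat = (k:ℕ); rw [q_floor t]; omega)
  simp only [hk']
  rw [if_neg hmem]

lemma AbZ_neg_mem (t : ℤ) (ht : t ≤ -1) (S T : Finset ℕ+) (s : ℕ+)
    (hs : (s:ℕ) = (-t).toNat) (hmem : s ∈ S) : AbZ t (S, T) = 0 := by
  unfold AbZ Abasis
  rw [if_pos (q_den t)]
  simp only [q_floor t]
  rw [dif_neg (by omega : ¬ (1:ℤ) ≤ t - 1), dif_pos (by omega : t - 1 ≤ -2)]
  have hss : (⟨(-(t-1) - 1).toNat, by omega⟩ : ℕ+) = s :=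
    Subtype.ext (show (-(t-1)-1).toNat = (s:ℕ) by omega)
  simp only [hss]
  have hs' : ∀ h : 0 < (-⌊(t:ℚ) - 1/2⌋ - 1).toNat, (⟨(-⌊(t:ℚ) - 1/2⌋ - 1).toNat, h⟩ : ℕ+) = s :=
    fun h => Subtype.ext (by show (-⌊(t:ℚ) - 1/2⌋ - 1).toNat = (s:ℕ); rw [q_floor t]; omega)
  simp only [hs']
  rw [if_pos hmem]

lemma AbZ_neg_not (t : ℤ) (ht : t ≤ -1) (S T : Finset ℕ+) (s : ℕ+)
    (hs : (s:ℕ) = (-t).toNat) (hmem : s ∉ S) :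
    AbZ t (S, T) = (((t - 1 : ℤ) : ℂ) * (-1) ^ ((S.filter (s < ·)).card)) •
      Finsupp.single (insert s S, T) (1 : ℂ) := by
  unfold AbZ Abasis
  rw [if_pos (q_den t)]
  simp only [q_floor t]
  rw [dif_neg (by omega : ¬ (1:ℤ) ≤ t - 1), dif_pos (by omega : t - 1 ≤ -2)]
  have hss : (⟨(-(t-1) - 1).toNat, by omega⟩ : ℕ+) = s :=
    Subtype.ext (show (-(t-1)-1).toNat = (s:ℕ) by omega)
  simp only [hss]
  have hs' : ∀ h : 0 < (-⌊(t:ℚ) - 1/2⌋ - 1).toNat, (⟨(-⌊(t:ℚ) - 1/2⌋ - 1).toNat, h⟩ : ℕ+) = s :=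
    fun h => Subtype.ext (by show (-⌊(t:ℚ) - 1/2⌋ - 1).toNat = (s:ℕ); rw [q_floor t]; omega)
  simp only [hs']
  rw [if_neg hmem]

end Dev
section Dev2

lemma cnt_lt (T : Finset ℕ+) (k : ℕ+) : ((T.filter (· < k)).card : ℕ) < (k : ℕ) := by
  have h : (T.filter (· < k)).card ≤ (Finset.Ico 1 (k:ℕ)).card := by
    refine Finset.card_le_card_of_injOn (fun t : ℕ+ => (t:ℕ)) ?_ ?_
    · intro a ha
      simp only [Finset.mem_coe, Finset.mem_filter] at ha
      simp only [Finset.mem_coe, Finset.mem_Ico]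
      exact ⟨a.pos, by exact_mod_cast ha.2⟩
    · intro a _ b _ hab
      exact PNat.coe_injective hab
  rw [Nat.card_Ico] at h
  have hk := k.pos
  omega

lemma cnt_erase (T : Finset ℕ+) (k j : ℕ+) (hk : k ∈ T) (hne : k ≠ j) :
    ((T.erase k).filter (· < j)).card =
      (T.filter (· < j)).card - (if k < j then 1 else 0) := by
  rw [Finset.filter_erase]
  by_cases h : k < j
  · rw [if_pos h]
    have hmem : k ∈ T.filter (· < j) := Finset.mem_filter.2 ⟨hk, h⟩
    rw [Finset.card_erase_of_mem hmem]
  · rw [if_neg h]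
    have hnm : k ∉ T.filter (· < j) := fun hm => h (Finset.mem_filter.1 hm).2
    rw [Finset.erase_eq_of_notMem hnm, Nat.sub_zero]

lemma cnt_insert (S : Finset ℕ+) (s j : ℕ+) (hs : s ∉ S) :
    (((insert s S).filter (j < ·)).card : ℕ) =
      (S.filter (j < ·)).card + (if j < s then 1 else 0) := by
  rw [Finset.filter_insert]
  by_cases h : j < s
  · rw [if_pos h, if_pos h,
      Finset.card_insert_of_notMem (fun hmem => hs (Finset.mem_filter.1 hmem).1)]
  · rw [if_neg h, if_neg h, add_zero]

/-- Composition `A(u-1/2) ∘ A(t-1/2)` at the basis level. -/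
noncomputable def AAc (u t : ℤ) (ST : Finset ℕ+ × Finset ℕ+) : Wedge :=
  (AbZ t ST).sum fun V c => c • AbZ u V

lemma AAc_zero_right (u t : ℤ) (ST : Finset ℕ+ × Finset ℕ+) (h : AbZ t ST = 0) :
    AAc u t ST = 0 := by
  rw [AAc, h, Finsupp.sum_zero_index]

lemma AAc_single (u t : ℤ) (ST V : Finset ℕ+ × Finset ℕ+) (c : ℂ)
    (h : AbZ t ST = c • Finsupp.single V 1) : AAc u t ST = c • AbZ u V := by
  rw [AAc, h, Finsupp.smul_single', mul_one]
  exact Finsupp.sum_single_index (zero_smul ℂ (AbZ u V))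

lemma scal₁ (a b : ℂ) (α β γ δ : ℕ) (h : γ + δ = α + β + 1) :
    (a * (-1)^α) * (b * (-1)^β) = -((b * (-1)^γ) * (a * (-1)^δ)) := by
  have h2 : ((-1:ℂ))^γ * (-1)^δ = -((-1)^α * (-1)^β) := by
    rw [← pow_add, ← pow_add, h, pow_succ]; ring
  calc (a * (-1:ℂ)^α) * (b * (-1)^β) = a*b*((-1)^α*(-1)^β) := by ring
    _ = a*b*(-((-1)^γ*(-1)^δ)) := by rw [h2]; ring
    _ = -((b * (-1)^γ) * (a * (-1)^δ)) := by ring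

lemma scal₂ (a b : ℂ) (α β γ δ : ℕ) (h : α + β = γ + δ + 1) :
    (a * (-1)^α) * (b * (-1)^β) = -((b * (-1)^γ) * (a * (-1)^δ)) := by
  rw [scal₁ b a γ δ α β h, neg_neg]

end Dev2
section Dev3

lemma AAc_anti_TT (u t : ℤ) (ht : 2 ≤ t) (hu : 2 ≤ u) (S T : Finset ℕ+) :
    AAc u t (S, T) = - AAc t u (S, T) := by
  set kt : ℕ+ := ⟨(t-1).toNat, by omega⟩ with hktdef
  set ku : ℕ+ := ⟨(u-1).toNat, by omega⟩ with hkudef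
  by_cases hkt : kt ∈ T
  · by_cases hku : ku ∈ T
    · rcases lt_trichotomy kt ku with hlt | heq | hgt
      · -- kt < ku
        have hne : kt ≠ ku := ne_of_lt hlt
        have e1 := AbZ_pos_mem t ht S T kt rfl hkt
        have h1 := AAc_single u t _ _ _ e1
        have hmem2 : ku ∈ T.erase kt := Finset.mem_erase.2 ⟨hne.symm, hku⟩
        have e2 := AbZ_pos_mem u hu S (T.erase kt) ku rfl hmem2
        have e1' := AbZ_pos_mem u hu S T ku rfl hku
        have h1' := AAc_single t u _ _ _ e1'
        have hmem2' : kt ∈ T.erase ku := Finset.mem_erase.2 ⟨hne, hkt⟩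
        have e2' := AbZ_pos_mem t ht S (T.erase ku) kt rfl hmem2'
        rw [h1, e2, h1', e2', smul_smul, smul_smul,
          (Finset.erase_right_comm : (T.erase kt).erase ku = (T.erase ku).erase kt),
          cnt_erase T kt ku hkt hne, cnt_erase T ku kt hku hne.symm,
          if_pos hlt, if_neg (not_lt_of_gt hlt), ← neg_smul]
        congr 1
        have hA : (T.filter (· < kt)).card < (t-1).toNat := cnt_lt T kt
        have hB : (T.filter (· < ku)).card < (u-1).toNat := cnt_lt T ku
        have hB1 : 0 < (T.filter (· < ku)).card :=
          Finset.card_pos.2 ⟨kt, Finset.mem_filter.2 ⟨hkt, hlt⟩⟩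
        exact scal₂ _ _ _ _ _ _ (by omega)
      · -- kt = ku : both sides vanish
        have e1 := AbZ_pos_mem t ht S T kt rfl hkt
        have h1 := AAc_single u t _ _ _ e1
        have e1' := AbZ_pos_mem u hu S T ku rfl hku
        have h1' := AAc_single t u _ _ _ e1'
        rw [h1, h1',
          AbZ_pos_not u hu S (T.erase kt) ku rfl (by rw [← heq]; exact Finset.notMem_erase _ _),
          AbZ_pos_not t ht S (T.erase ku) kt rfl (by rw [heq]; exact Finset.notMem_erase _ _),
          smul_zero, smul_zero, neg_zero]
      · -- ku < kt
        have hne : kt ≠ ku := (ne_of_lt hgt).symm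
        have e1 := AbZ_pos_mem t ht S T kt rfl hkt
        have h1 := AAc_single u t _ _ _ e1
        have hmem2 : ku ∈ T.erase kt := Finset.mem_erase.2 ⟨hne.symm, hku⟩
        have e2 := AbZ_pos_mem u hu S (T.erase kt) ku rfl hmem2
        have e1' := AbZ_pos_mem u hu S T ku rfl hku
        have h1' := AAc_single t u _ _ _ e1'
        have hmem2' : kt ∈ T.erase ku := Finset.mem_erase.2 ⟨hne, hkt⟩
        have e2' := AbZ_pos_mem t ht S (T.erase ku) kt rfl hmem2'
        rw [h1, e2, h1', e2', smul_smul, smul_smul,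
          (Finset.erase_right_comm : (T.erase kt).erase ku = (T.erase ku).erase kt),
          cnt_erase T kt ku hkt hne, cnt_erase T ku kt hku hne.symm,
          if_neg (not_lt_of_gt hgt), if_pos hgt, ← neg_smul]
        congr 1
        have hA : (T.filter (· < kt)).card < (t-1).toNat := cnt_lt T kt
        have hB : (T.filter (· < ku)).card < (u-1).toNat := cnt_lt T ku
        have hA1 : 0 < (T.filter (· < kt)).card :=
          Finset.card_pos.2 ⟨ku, Finset.mem_filter.2 ⟨hku, hgt⟩⟩
        exact scal₁ _ _ _ _ _ _ (by omega)
    · -- ku ∉ T : both sides vanish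
      have e1 := AbZ_pos_mem t ht S T kt rfl hkt
      have h1 := AAc_single u t _ _ _ e1
      rw [h1, AbZ_pos_not u hu S (T.erase kt) ku rfl
          (fun hm => hku (Finset.mem_of_mem_erase hm)), smul_zero,
        AAc_zero_right t u _ (AbZ_pos_not u hu S T ku rfl hku), neg_zero]
  · by_cases hku : ku ∈ T
    · have e1' := AbZ_pos_mem u hu S T ku rfl hku
      have h1' := AAc_single t u _ _ _ e1'
      rw [h1', AbZ_pos_not t ht S (T.erase ku) kt rfl
          (fun hm => hkt (Finset.mem_of_mem_erase hm)), smul_zero, neg_zero,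
        AAc_zero_right u t _ (AbZ_pos_not t ht S T kt rfl hkt)]
    · rw [AAc_zero_right u t _ (AbZ_pos_not t ht S T kt rfl hkt),
        AAc_zero_right t u _ (AbZ_pos_not u hu S T ku rfl hku), neg_zero]

end Dev3
section Dev4

lemma AAc_anti_TS (u t : ℤ) (ht : 2 ≤ t) (hu : u ≤ -1) (S T : Finset ℕ+) :
    AAc u t (S, T) = - AAc t u (S, T) := by
  set kt : ℕ+ := ⟨(t-1).toNat, by omega⟩ with hktdef
  set su : ℕ+ := ⟨(-u).toNat, by omega⟩ with hsudef
  by_cases hkt : kt ∈ T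
  · by_cases hsu : su ∈ S
    · have e1 := AbZ_pos_mem t ht S T kt rfl hkt
      have h1 := AAc_single u t _ _ _ e1
      rw [h1, AbZ_neg_mem u hu S (T.erase kt) su rfl hsu, smul_zero,
        AAc_zero_right t u _ (AbZ_neg_mem u hu S T su rfl hsu), neg_zero]
    · have e1 := AbZ_pos_mem t ht S T kt rfl hkt
      have h1 := AAc_single u t _ _ _ e1
      have e2 := AbZ_neg_not u hu S (T.erase kt) su rfl hsu
      have e1' := AbZ_neg_not u hu S T su rfl hsu
      have h1' := AAc_single t u _ _ _ e1'
      have e2' := AbZ_pos_mem t ht (insert su S) T kt rfl hkt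
      rw [h1, e2, h1', e2', smul_smul, smul_smul,
        Finset.card_insert_of_notMem hsu, ← neg_smul]
      congr 1
      have hA : (T.filter (· < kt)).card < (t-1).toNat := cnt_lt T kt
      exact scal₁ _ _ _ _ _ _ (by omega)
  · by_cases hsu : su ∈ S
    · rw [AAc_zero_right u t _ (AbZ_pos_not t ht S T kt rfl hkt),
        AAc_zero_right t u _ (AbZ_neg_mem u hu S T su rfl hsu), neg_zero]
    · have e1' := AbZ_neg_not u hu S T su rfl hsu
      have h1' := AAc_single t u _ _ _ e1'
      rw [AAc_zero_right u t _ (AbZ_pos_not t ht S T kt rfl hkt), h1',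
        AbZ_pos_not t ht (insert su S) T kt rfl hkt, smul_zero, neg_zero]

lemma AAc_anti_SS (u t : ℤ) (ht : t ≤ -1) (hu : u ≤ -1) (S T : Finset ℕ+) :
    AAc u t (S, T) = - AAc t u (S, T) := by
  set st : ℕ+ := ⟨(-t).toNat, by omega⟩ with hstdef
  set su : ℕ+ := ⟨(-u).toNat, by omega⟩ with hsudef
  by_cases hst : st ∈ S
  · rw [AAc_zero_right u t _ (AbZ_neg_mem t ht S T st rfl hst)]
    by_cases hsu : su ∈ S
    · rw [AAc_zero_right t u _ (AbZ_neg_mem u hu S T su rfl hsu), neg_zero]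
    · have h1' := AAc_single t u _ _ _ (AbZ_neg_not u hu S T su rfl hsu)
      rw [h1', AbZ_neg_mem t ht (insert su S) T st rfl (Finset.mem_insert_of_mem hst),
        smul_zero, neg_zero]
  · by_cases hsu : su ∈ S
    · have h1 := AAc_single u t _ _ _ (AbZ_neg_not t ht S T st rfl hst)
      rw [h1, AbZ_neg_mem u hu (insert st S) T su rfl (Finset.mem_insert_of_mem hsu),
        smul_zero, AAc_zero_right t u _ (AbZ_neg_mem u hu S T su rfl hsu), neg_zero]
    · by_cases heq : st = su
      · have h1 := AAc_single u t _ _ _ (AbZ_neg_not t ht S T st rfl hst)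
        have h1' := AAc_single t u _ _ _ (AbZ_neg_not u hu S T su rfl hsu)
        rw [h1, h1',
          AbZ_neg_mem u hu (insert st S) T su rfl
            (by rw [← heq]; exact Finset.mem_insert_self _ _),
          AbZ_neg_mem t ht (insert su S) T st rfl
            (by rw [heq]; exact Finset.mem_insert_self _ _),
          smul_zero, smul_zero, neg_zero]
      · have hnm2 : su ∉ insert st S :=
          fun hm => (Finset.mem_insert.1 hm).elim (fun h => heq h.symm) hsu
        have hnm2' : st ∉ insert su S :=
          fun hm => (Finset.mem_insert.1 hm).elim heq hst
        have h1 := AAc_single u t _ _ _ (AbZ_neg_not t ht S T st rfl hst)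
        have e2 := AbZ_neg_not u hu (insert st S) T su rfl hnm2
        have h1' := AAc_single t u _ _ _ (AbZ_neg_not u hu S T su rfl hsu)
        have e2' := AbZ_neg_not t ht (insert su S) T st rfl hnm2'
        rw [h1, e2, h1', e2', smul_smul, smul_smul,
          Finset.insert_comm su st,
          cnt_insert S st su hst, cnt_insert S su st hsu, ← neg_smul]
        congr 1
        rcases lt_trichotomy st su with hlt | heqq | hgt
        · rw [if_neg (not_lt_of_gt hlt), if_pos hlt]
          exact scal₁ _ _ _ _ _ _ (by omega)
        · exact absurd heqq heq
        · rw [if_pos hgt, if_neg (not_lt_of_gt hgt)]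
          exact scal₂ _ _ _ _ _ _ (by omega)

lemma AAc_anti (u t : ℤ) (ST : Finset ℕ+ × Finset ℕ+) : AAc u t ST = - AAc t u ST := by
  obtain ⟨S, T⟩ := ST
  by_cases htt : t = 0 ∨ t = 1
  · rw [AAc_zero_right u t _ (AbZ_triv t htt _)]
    have h2 : AAc t u (S, T) = 0 := by
      simp [AAc, AbZ_triv t htt]
    rw [h2, neg_zero]
  · by_cases huu : u = 0 ∨ u = 1
    · rw [AAc_zero_right t u _ (AbZ_triv u huu _), neg_zero]
      simp [AAc, AbZ_triv u huu]
    · rcases (show 2 ≤ t ∨ t ≤ -1 by omega) with ht | ht <;>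
        rcases (show 2 ≤ u ∨ u ≤ -1 by omega) with hu | hu
      · exact AAc_anti_TT u t ht hu S T
      · exact AAc_anti_TS u t ht hu S T
      · rw [show AAc t u (S,T) = - AAc u t (S,T) from AAc_anti_TS t u hu ht S T, neg_neg]
      · exact AAc_anti_SS u t ht hu S T

end Dev4
section Dev5

lemma embVac_eq (w : Wedge) (q : ℤ) :
    embVac w q = Finsupp.mapDomain (fun V => (V, q)) w := rfl

lemma embVac_zero (q : ℤ) : embVac 0 q = 0 := Finsupp.sum_zero_index

lemma embVac_add (f g : Wedge) (q : ℤ) :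
    embVac (f + g) q = embVac f q + embVac g q := by
  rw [embVac_eq, embVac_eq, embVac_eq, Finsupp.mapDomain_add]

lemma embVac_smul (c : ℂ) (f : Wedge) (q : ℤ) :
    embVac (c • f) q = c • embVac f q := by
  rw [embVac_eq, embVac_eq, Finsupp.mapDomain_smul]

lemma embVac_single (V : Finset ℕ+ × Finset ℕ+) (c : ℂ) (q : ℤ) :
    embVac (Finsupp.single V c) q = Finsupp.single (V, q) c :=
  Finsupp.sum_single_index (Finsupp.single_zero _)

lemma embVac_sum {α : Type*} (s : Finset α) (f : α → Wedge) (q : ℤ) :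
    embVac (∑ i ∈ s, f i) q = ∑ i ∈ s, embVac (f i) q := by
  induction s using Finset.cons_induction with
  | empty => simp [embVac_zero]
  | cons a s ha ih => rw [Finset.sum_cons, Finset.sum_cons, embVac_add, ih]

lemma Finsupp_sum_add_smul {ι : Type*} (f g : ι →₀ ℂ) {M : Type*} [AddCommMonoid M]
    [Module ℂ M] (h : ι → M) :
    (f + g).sum (fun i c => c • h i) =
      f.sum (fun i c => c • h i) + g.sum (fun i c => c • h i) :=
  Finsupp.sum_add_index' (fun _ => zero_smul _ _) (fun _ b c => add_smul b c _)

lemma Finsupp_sum_single_smul {ι : Type*} (i : ι) (c : ℂ) {M : Type*} [AddCommMonoid M]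
    [Module ℂ M] (h : ι → M) :
    (Finsupp.single i c).sum (fun j d => d • h j) = c • h i :=
  Finsupp.sum_single_index (zero_smul _ _)

lemma Zplus_zero (a : ℤ) : Zplus a 0 = 0 := Finsupp.sum_zero_index

lemma Zplus_add (a : ℤ) (x y : Vac) : Zplus a (x + y) = Zplus a x + Zplus a y :=
  Finsupp_sum_add_smul x y
    (fun STp => embVac (Abasis ((a : ℚ) - STp.2 - 1/2) STp.1) (STp.2 + 1))

lemma Zplus_single (a : ℤ) (V : Finset ℕ+ × Finset ℕ+) (q : ℤ) (c : ℂ) :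
    Zplus a (Finsupp.single (V, q) c) = c • embVac (AbZ (a - q) V) (q + 1) := by
  have h1 := Finsupp_sum_single_smul ((V, q)) c
    (fun STp => embVac (Abasis ((a : ℚ) - STp.2 - 1/2) STp.1) (STp.2 + 1))
  dsimp only at h1
  rw [show ((a:ℚ) - ((q:ℤ):ℚ) - 1/2) = ((a - q : ℤ) : ℚ) - 1/2 from by push_cast; ring] at h1
  exact h1

lemma Zplus_embVac (a : ℤ) (w : Wedge) (q : ℤ) :
    Zplus a (embVac w q) = embVac (w.sum fun V c => c • AbZ (a - q) V) (q + 1) := by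
  induction w using Finsupp.induction_linear with
  | zero => rw [embVac_zero, Zplus_zero, Finsupp.sum_zero_index, embVac_zero]
  | add f g hf hg =>
      rw [embVac_add, Zplus_add, hf, hg, Finsupp_sum_add_smul f g (fun V => AbZ (a - q) V),
        embVac_add]
  | single V c =>
      rw [embVac_single, Zplus_single, Finsupp_sum_single_smul V c (fun V => AbZ (a - q) V),
        embVac_smul]

lemma ZZ (a b : ℤ) (V : Finset ℕ+ × Finset ℕ+) (p : ℤ) :
    Zplus a (Zplus b (Finsupp.single ((V : Finset ℕ+ × Finset ℕ+), p) (1:ℂ))) =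
      embVac (AAc (a - p - 1) (b - p) V) (p + 2) := by
  rw [Zplus_single, one_smul, Zplus_embVac,
    show a - (p+1) = a - p - 1 from by ring, show p + 1 + 1 = p + 2 from by ring]
  rfl

lemma AbZ_vanish (S T : Finset ℕ+) (t : ℤ)
    (hM : ((T.sup (fun x => (x:ℕ)) : ℕ) : ℤ) + 2 ≤ t) : AbZ t (S, T) = 0 := by
  apply AbZ_pos_not t (by omega) S T ⟨(t-1).toNat, by omega⟩ rfl
  intro hmem
  have h2 : (t-1).toNat ≤ T.sup (fun x => (x:ℕ)) :=
    Finset.le_sup (f := fun x : ℕ+ => (x:ℕ)) hmem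
  omega

lemma wedge_self_eq_neg (x : Wedge) (h : x = -x) : x = 0 := by
  have h1 : x + x = 0 := by nth_rewrite 2 [h]; exact add_neg_cancel x
  have h2 : (2:ℂ) • x = 0 := by rw [two_smul]; exact h1
  rcases smul_eq_zero.1 h2 with h3 | h3
  · exact absurd h3 two_ne_zero
  · exact h3

end Dev5
section Dev6

/-- `Gfun c' ST t = A(c'-t-1/2) A(t-1/2) v_ST`, the composite along the antidiagonal. -/
noncomputable def Gfun (c' : ℤ) (ST : Finset ℕ+ × Finset ℕ+) (t : ℤ) : Wedge :=
  AAc (c' - t) t ST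

lemma Gfun_refl (c' : ℤ) (ST : Finset ℕ+ × Finset ℕ+) (t : ℤ) :
    Gfun c' ST t = - Gfun c' ST (c' - t) := by
  rw [Gfun, Gfun, AAc_anti, show c' - (c' - t) = t from by ring]

lemma Gfun_self_zero (c' : ℤ) (ST : Finset ℕ+ × Finset ℕ+) (t : ℤ) (h : t = c' - t) :
    Gfun c' ST t = 0 :=
  wedge_self_eq_neg _ (by nth_rewrite 2 [h]; exact Gfun_refl c' ST t)

lemma Gfun_hi (c' : ℤ) (S T : Finset ℕ+) (t : ℤ)
    (h : ((T.sup (fun x => (x:ℕ)) : ℕ) : ℤ) + 2 ≤ t) : Gfun c' (S, T) t = 0 :=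
  AAc_zero_right _ _ _ (AbZ_vanish S T t h)

lemma Gfun_lo (c' : ℤ) (S T : Finset ℕ+) (t : ℤ)
    (h : ((T.sup (fun x => (x:ℕ)) : ℕ) : ℤ) + 2 ≤ c' - t) : Gfun c' (S, T) t = 0 := by
  rw [Gfun_refl, Gfun_hi c' S T (c' - t) h, neg_zero]

lemma sum_range_cancel (c' : ℤ) (ST : Finset ℕ+ × Finset ℕ+) (t₀ : ℤ) (d : ℕ)
    (hd : t₀ + t₀ + (d:ℤ) - 1 = c') :
    ∑ k ∈ Finset.range d, Gfun c' ST (t₀ + (k:ℤ)) = 0 := by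
  apply Finset.sum_involution (fun a _ => d - 1 - a)
  · intro a ha
    have ha' := Finset.mem_range.1 ha
    have hcast : t₀ + ((d - 1 - a : ℕ) : ℤ) = c' - (t₀ + (a:ℤ)) := by omega
    rw [hcast, Gfun_refl c' ST (t₀ + (a:ℤ))]
    exact neg_add_cancel _
  · intro a ha hne hga
    exact hne (Gfun_self_zero c' ST _
      (by have := Finset.mem_range.1 ha; omega))
  · intro a ha
    exact Finset.mem_range.2 (by have := Finset.mem_range.1 ha; omega)
  · intro a ha
    have := Finset.mem_range.1 ha
    omega

end Dev6
section Dev7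

lemma term_eq (m n p : ℤ) (k : ℕ) (S T : Finset ℕ+) :
    Zplus (m - (k:ℤ)) (Zplus (n + (k:ℤ)) (Finsupp.single ((S,T), p) (1:ℂ))) =
      embVac (Gfun (m + n - 2*p - 1) (S,T) ((n - p) + (k:ℤ))) (p+2) := by
  rw [ZZ (m - k) (n + k) (S,T) p, Gfun,
    show m + n - 2*p - 1 - ((n - p) + (k:ℤ)) = m - (k:ℤ) - p - 1 from by ring,
    show n - p + (k:ℤ) = n + (k:ℤ) - p from by ring]

lemma fin_lemma (m n p : ℤ) (S T : Finset ℕ+) :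
    {k : ℕ | Zplus (m - (k:ℤ)) (Zplus (n + (k:ℤ)) (Finsupp.single ((S,T), p) (1:ℂ))) ≠ 0}.Finite := by
  apply Set.Finite.subset
    (Set.finite_lt_nat (((T.sup (fun x => (x:ℕ)) : ℕ) : ℤ) + 2 - (n - p)).toNat)
  intro k hk
  simp only [Set.mem_setOf_eq] at hk ⊢
  by_contra hged
  apply hk
  rw [term_eq m n p k S T,
    Gfun_hi _ _ _ _ (by omega : ((T.sup (fun x => (x:ℕ)) : ℕ) : ℤ) + 2 ≤ (n - p) + (k:ℤ)),
    embVac_zero]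

lemma sum_range_split {M : Type*} [AddCommMonoid M] (f : ℕ → M) (d E : ℕ) :
    ∑ k ∈ Finset.range (d + E), f k =
      (∑ k ∈ Finset.range d, f k) + ∑ k ∈ Finset.range E, f (d + k) := by
  rw [Finset.range_eq_Ico,
    ← Finset.sum_Ico_consecutive _ (Nat.zero_le d) (Nat.le_add_right d E),
    ← Finset.range_eq_Ico]
  congr 1
  rw [Finset.sum_Ico_eq_sum_range, show d + E - d = E from by omega]

lemma key (m n : ℤ) (S T : Finset ℕ+) (p : ℤ) (hnm : n ≤ m) :
    ∑ᶠ k : ℕ, Zplus (m - (k:ℤ)) (Zplus (n + (k:ℤ)) (Finsupp.single ((S,T), p) (1:ℂ))) =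
      ∑ᶠ k : ℕ, Zplus (n - (k:ℤ)) (Zplus (m + (k:ℤ)) (Finsupp.single ((S,T), p) (1:ℂ))) := by
  have hfun1 : (fun k : ℕ => Zplus (m - (k:ℤ)) (Zplus (n + (k:ℤ))
      (Finsupp.single ((S,T), p) (1:ℂ)))) =
      fun k : ℕ => embVac (Gfun (m + n - 2*p - 1) (S,T) ((n - p) + (k:ℤ))) (p+2) :=
    funext fun k => term_eq m n p k S T
  have hfun2 : (fun k : ℕ => Zplus (n - (k:ℤ)) (Zplus (m + (k:ℤ))
      (Finsupp.single ((S,T), p) (1:ℂ)))) =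
      fun k : ℕ => embVac (Gfun (m + n - 2*p - 1) (S,T) ((m - p) + (k:ℤ))) (p+2) := by
    refine funext fun k => (term_eq n m p k S T).trans ?_
    rw [show n + m - 2*p - 1 = m + n - 2*p - 1 from by ring]
  rw [hfun1, hfun2]
  set X : ℕ := (((T.sup (fun x => (x:ℕ)) : ℕ) : ℤ) + 2 - (n - p)).toNat with hX
  set d : ℕ := (m - n).toNat with hd
  have e1 : ∑ᶠ k : ℕ, embVac (Gfun (m + n - 2*p - 1) (S,T) ((n - p) + (k:ℤ))) (p+2) =
      ∑ k ∈ Finset.range (d + X), embVac (Gfun (m + n - 2*p - 1) (S,T) ((n - p) + (k:ℤ))) (p+2) := by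
    apply finsum_eq_sum_of_support_subset
    intro k hk
    simp only [Function.mem_support, Ne] at hk
    simp only [Finset.coe_range, Set.mem_Iio]
    by_contra hged
    exact hk (by rw [Gfun_hi _ _ _ _ (by omega), embVac_zero])
  have e2 : ∑ᶠ k : ℕ, embVac (Gfun (m + n - 2*p - 1) (S,T) ((m - p) + (k:ℤ))) (p+2) =
      ∑ k ∈ Finset.range X, embVac (Gfun (m + n - 2*p - 1) (S,T) ((m - p) + (k:ℤ))) (p+2) := by
    apply finsum_eq_sum_of_support_subset
    intro k hk
    simp only [Function.mem_support, Ne] at hk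
    simp only [Finset.coe_range, Set.mem_Iio]
    by_contra hged
    exact hk (by rw [Gfun_hi _ _ _ _ (by omega), embVac_zero])
  rw [e1, e2, ← embVac_sum, ← embVac_sum]
  congr 1
  rw [sum_range_split (fun k => Gfun (m + n - 2*p - 1) (S,T) ((n - p) + (k:ℤ))) d X,
    sum_range_cancel (m + n - 2*p - 1) (S,T) (n - p) d (by omega), zero_add]
  apply Finset.sum_congr rfl
  intro k _
  congr 1
  push_cast
  omega

end Dev7

theorem statement13 (m n : ℤ) (S T : Finset ℕ+) (p : ℤ) (w : Vac)
    (hw : w = Finsupp.single ((S, T), p) 1) :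
    {k : ℕ | Zplus (m - k) (Zplus (n + k) w) ≠ 0}.Finite ∧
    {k : ℕ | Zplus (n - k) (Zplus (m + k) w) ≠ 0}.Finite ∧
    ∑ᶠ k : ℕ, Zplus (m - k) (Zplus (n + k) w) =
      ∑ᶠ k : ℕ, Zplus (n - k) (Zplus (m + k) w) := by
  
  subst hw
  refine ⟨fin_lemma m n p S T, fin_lemma n m p S T, ?_⟩
  rcases le_total n m with h | h
  · exact key m n S T p h
  · exact (key n m S T p h).symm
end
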